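/- arXiv:1312.5487 — 8 statements merged into one kernel-verified Lean document; each statement's English description precedes it below -/
import Mathlib

section
/- Define a relation ⪯ on n×n matrices over ℕ by A ⪯ B if and only if B_{NE,s,t} ≤ A_{NE,s,t} and B_{SW,s,t} ≤ A_{SW,s,t} for all s, t ∈ {1,…,n}. Then ⪯ is reflexive and transitive, and it is antisymmetric on the set of matrices with a fixed row-sum vector and a fixed column-sum vector (i.e., if A ⪯ B and B ⪯ A with ro(A) = ro(B) and co(A) = co(B), then A = B). -/
open Finset

def NEf {n : ℕ} (A : Matrix (Fin n) (Fin n) ℕ) (s t : Fin n) : ℕ :=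
  ∑ x : Fin n, ∑ y : Fin n, if x ≤ s ∧ t ≤ y then A x y else 0

def SWf {n : ℕ} (A : Matrix (Fin n) (Fin n) ℕ) (s t : Fin n) : ℕ :=
  ∑ x : Fin n, ∑ y : Fin n, if s ≤ x ∧ y ≤ t then A x y else 0

/-- `A ⪯ B` iff all NE and SW corner sums of `B` are bounded by those of `A`. -/
def Deg {n : ℕ} (A B : Matrix (Fin n) (Fin n) ℕ) : Prop :=
  ∀ s t : Fin n, NEf B s t ≤ NEf A s t ∧ SWf B s t ≤ SWf A s t

def T1 {n : ℕ} (A : Matrix (Fin n) (Fin n) ℕ) (s t : Fin n) : ℕ :=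
  ∑ x : Fin n, ∑ y : Fin n, if x < s ∧ t ≤ y then A x y else 0

def T2 {n : ℕ} (A : Matrix (Fin n) (Fin n) ℕ) (s t : Fin n) : ℕ :=
  ∑ x : Fin n, ∑ y : Fin n, if x ≤ s ∧ t < y then A x y else 0

def T3 {n : ℕ} (A : Matrix (Fin n) (Fin n) ℕ) (s t : Fin n) : ℕ :=
  ∑ x : Fin n, ∑ y : Fin n, if x < s ∧ t < y then A x y else 0

lemma T1_eq {n : ℕ} {A B : Matrix (Fin n) (Fin n) ℕ}
    (h : ∀ s t, NEf A s t = NEf B s t) (s t : Fin n) : T1 A s t = T1 B s t := by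
  rcases s with ⟨sv, hs⟩
  rcases sv with _ | k
  · have hz : ∀ (C : Matrix (Fin n) (Fin n) ℕ), T1 C ⟨0, hs⟩ t = 0 := by
      intro C
      refine Finset.sum_eq_zero fun x _ => Finset.sum_eq_zero fun y _ => ?_
      rw [if_neg]
      rintro ⟨hx, -⟩
      exact absurd hx (by simp [Fin.lt_def])
    rw [hz, hz]
  · have hk : k < n := Nat.lt_of_succ_lt hs
    have hT : ∀ (C : Matrix (Fin n) (Fin n) ℕ), T1 C ⟨k+1, hs⟩ t = NEf C ⟨k, hk⟩ t := by
      intro C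
      refine Finset.sum_congr rfl fun x _ => Finset.sum_congr rfl fun y _ => ?_
      refine if_congr ?_ rfl rfl
      simp only [Fin.lt_def, Fin.le_def]
      omega
    rw [hT, hT, h]

lemma T2_eq {n : ℕ} {A B : Matrix (Fin n) (Fin n) ℕ}
    (h : ∀ s t, NEf A s t = NEf B s t) (s t : Fin n) : T2 A s t = T2 B s t := by
  by_cases ht : t.val + 1 < n
  · have hT : ∀ (C : Matrix (Fin n) (Fin n) ℕ), T2 C s t = NEf C s ⟨t.val+1, ht⟩ := by
      intro C
      refine Finset.sum_congr rfl fun x _ => Finset.sum_congr rfl fun y _ => ?_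
      refine if_congr ?_ rfl rfl
      simp only [Fin.lt_def, Fin.le_def]
      omega
    rw [hT, hT, h]
  · have hz : ∀ (C : Matrix (Fin n) (Fin n) ℕ), T2 C s t = 0 := by
      intro C
      refine Finset.sum_eq_zero fun x _ => Finset.sum_eq_zero fun y _ => ?_
      rw [if_neg]
      rintro ⟨-, hy⟩
      have := y.isLt
      simp only [Fin.lt_def] at hy
      omega
    rw [hz, hz]

lemma T3_eq {n : ℕ} {A B : Matrix (Fin n) (Fin n) ℕ}
    (h : ∀ s t, NEf A s t = NEf B s t) (s t : Fin n) : T3 A s t = T3 B s t := by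
  rcases s with ⟨sv, hs⟩
  rcases sv with _ | k
  · have hz : ∀ (C : Matrix (Fin n) (Fin n) ℕ), T3 C ⟨0, hs⟩ t = 0 := by
      intro C
      refine Finset.sum_eq_zero fun x _ => Finset.sum_eq_zero fun y _ => ?_
      rw [if_neg]
      rintro ⟨hx, -⟩
      exact absurd hx (by simp [Fin.lt_def])
    rw [hz, hz]
  · have hk : k < n := Nat.lt_of_succ_lt hs
    have hT : ∀ (C : Matrix (Fin n) (Fin n) ℕ), T3 C ⟨k+1, hs⟩ t = T2 C ⟨k, hk⟩ t := by
      intro C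
      refine Finset.sum_congr rfl fun x _ => Finset.sum_congr rfl fun y _ => ?_
      refine if_congr ?_ rfl rfl
      simp only [Fin.lt_def, Fin.le_def]
      omega
    rw [hT, hT, T2_eq h]

lemma incl_excl {n : ℕ} (A : Matrix (Fin n) (Fin n) ℕ) (s t : Fin n) :
    NEf A s t + T3 A s t = A s t + T1 A s t + T2 A s t := by
  have : ∀ x y : Fin n,
      ((if x ≤ s ∧ t ≤ y then A x y else 0) + (if x < s ∧ t < y then A x y else 0))
      = ((if x = s ∧ y = t then A x y else 0) + (if x < s ∧ t ≤ y then A x y else 0)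
        + (if x ≤ s ∧ t < y then A x y else 0)) := by
    intro x y
    simp only [Fin.lt_def, Fin.le_def, Fin.ext_iff]
    split_ifs <;> omega
  have hsum := Finset.sum_congr rfl fun x (_ : x ∈ Finset.univ) =>
    Finset.sum_congr rfl fun y (_ : y ∈ Finset.univ) => this x y
  simp only [Finset.sum_add_distrib] at hsum
  have hdiag : (∑ x : Fin n, ∑ y : Fin n, if x = s ∧ y = t then A x y else 0) = A s t := by
    rw [Finset.sum_eq_single s]
    · rw [Finset.sum_eq_single t]
      · simp
      · intro y _ hy; rw [if_neg (by tauto)]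
      · simp
    · intro x _ hx
      refine Finset.sum_eq_zero fun y _ => ?_
      rw [if_neg (by tauto)]
    · simp
  rw [NEf, T3, T1, T2, ← hdiag]
  exact hsum

theorem stmt2 {n : ℕ} :
    (∀ A : Matrix (Fin n) (Fin n) ℕ, Deg A A) ∧
    (∀ A B C : Matrix (Fin n) (Fin n) ℕ, Deg A B → Deg B C → Deg A C) ∧
    (∀ A B : Matrix (Fin n) (Fin n) ℕ, Deg A B → Deg B A →
      (∀ i, ∑ j, A i j = ∑ j, B i j) → (∀ i, ∑ j, A j i = ∑ j, B j i) → A = B) := by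
  refine ⟨fun A s t => ⟨le_refl _, le_refl _⟩,
    fun A B C hAB hBC s t => ⟨le_trans (hBC s t).1 (hAB s t).1, le_trans (hBC s t).2 (hAB s t).2⟩,
    fun A B hAB hBA _ _ => ?_⟩
  have h : ∀ s t, NEf A s t = NEf B s t :=
    fun s t => le_antisymm ((hBA s t).1) ((hAB s t).1)
  ext s t
  have h1 := incl_excl A s t
  have h2 := incl_excl B s t
  rw [h, T3_eq h] at h1
  rw [← T1_eq h, ← T2_eq h] at h2
  omega
end

section
/- Call an n×n matrix A over ℕ generic if for every pair of rows i < k and every pair of columns j < l, at least one of the two diagonal entries a_{ij}, a_{kl} of the corresponding 2×2 submatrix is zero. If A is generic and its row-sum vector equals its column-sum vector, then A is symmetric: a_{ij} = a_{ji} for all i, j. -/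
open Finset

/-- A matrix is generic if every 2×2 submatrix has a zero main-diagonal entry. -/
def Generic {n : ℕ} (A : Matrix (Fin n) (Fin n) ℕ) : Prop :=
  ∀ i k j l : Fin n, i < k → j < l → A i j = 0 ∨ A k l = 0

section Aux

variable {n : ℕ}

/-- NE quadrant sum: rows `< a`, columns `≥ b`. -/
def Dsum (A : Matrix (Fin n) (Fin n) ℕ) (a b : ℕ) : ℕ :=
  ∑ k : Fin n, ∑ l : Fin n, if k.val < a ∧ b ≤ l.val then A k l else 0

/-- SW quadrant sum: columns `< a`, rows `≥ b`. -/
def Dsum' (A : Matrix (Fin n) (Fin n) ℕ) (a b : ℕ) : ℕ :=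
  ∑ k : Fin n, ∑ l : Fin n, if l.val < a ∧ b ≤ k.val then A k l else 0

lemma sum2_add (f g : Fin n → Fin n → ℕ) :
    ((∑ k : Fin n, ∑ l : Fin n, f k l) + ∑ k : Fin n, ∑ l : Fin n, g k l) =
      ∑ k : Fin n, ∑ l : Fin n, (f k l + g k l) := by
  rw [← Finset.sum_add_distrib]
  exact Finset.sum_congr rfl fun k _ => (Finset.sum_add_distrib).symm

lemma exists_entry {A : Matrix (Fin n) (Fin n) ℕ} {P : Fin n → Fin n → Prop}
    [∀ k l, Decidable (P k l)]
    (hs : (∑ k : Fin n, ∑ l : Fin n, if P k l then A k l else 0) ≠ 0) :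
    ∃ k l, P k l ∧ A k l ≠ 0 := by
  obtain ⟨k, -, hk⟩ := Finset.exists_ne_zero_of_sum_ne_zero hs
  obtain ⟨l, -, hl⟩ := Finset.exists_ne_zero_of_sum_ne_zero hk
  rw [ite_ne_right_iff] at hl
  exact ⟨k, l, hl.1, hl.2⟩

lemma RC (A : Matrix (Fin n) (Fin n) ℕ)
    (h : ∀ i, ∑ j, A i j = ∑ j, A j i) (m : ℕ) :
    Dsum A m m = Dsum' A m m := by
  set T : ℕ := ∑ k : Fin n, ∑ l : Fin n, if k.val < m ∧ l.val < m then A k l else 0 with hT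
  have h1 : T + Dsum A m m = ∑ k : Fin n, ∑ l : Fin n, if k.val < m then A k l else 0 := by
    rw [Dsum, hT, sum2_add]
    refine Finset.sum_congr rfl fun k _ => Finset.sum_congr rfl fun l _ => ?_
    split_ifs <;> omega
  have h2 : T + Dsum' A m m = ∑ k : Fin n, ∑ l : Fin n, if l.val < m then A k l else 0 := by
    rw [Dsum', hT, sum2_add]
    refine Finset.sum_congr rfl fun k _ => Finset.sum_congr rfl fun l _ => ?_
    split_ifs <;> omega
  have h3 : (∑ k : Fin n, ∑ l : Fin n, if k.val < m then A k l else 0) =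
      ∑ k : Fin n, ∑ l : Fin n, if l.val < m then A k l else 0 := by
    calc (∑ k : Fin n, ∑ l : Fin n, if k.val < m then A k l else 0)
        = ∑ k : Fin n, if k.val < m then ∑ l, A k l else 0 := by
          refine Finset.sum_congr rfl fun k _ => ?_
          split_ifs <;> simp
      _ = ∑ k : Fin n, if k.val < m then ∑ l, A l k else 0 := by
          refine Finset.sum_congr rfl fun k _ => ?_
          rw [h k]
      _ = ∑ l : Fin n, ∑ k : Fin n, if l.val < m then A k l else 0 := by
          refine Finset.sum_congr rfl fun k _ => ?_
          split_ifs <;> simp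
      _ = ∑ k : Fin n, ∑ l : Fin n, if l.val < m then A k l else 0 := Finset.sum_comm
  omega

lemma DD' (A : Matrix (Fin n) (Fin n) ℕ) (hA : Generic A)
    (h : ∀ i, ∑ j, A i j = ∑ j, A j i) (a b : ℕ) (hab : a ≤ b) :
    Dsum A a b = Dsum' A a b := by
  set S1 : ℕ := ∑ k : Fin n, ∑ l : Fin n,
    if k.val < a ∧ a ≤ l.val ∧ l.val < b then A k l else 0 with hS1
  set S2 : ℕ := ∑ k : Fin n, ∑ l : Fin n,
    if a ≤ k.val ∧ k.val < b ∧ b ≤ l.val then A k l else 0 with hS2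
  set S1' : ℕ := ∑ k : Fin n, ∑ l : Fin n,
    if l.val < a ∧ a ≤ k.val ∧ k.val < b then A k l else 0 with hS1'
  set S2' : ℕ := ∑ k : Fin n, ∑ l : Fin n,
    if a ≤ l.val ∧ l.val < b ∧ b ≤ k.val then A k l else 0 with hS2'
  have e1 : Dsum A a a = Dsum A a b + S1 := by
    rw [Dsum, Dsum, hS1, sum2_add]
    refine Finset.sum_congr rfl fun k _ => Finset.sum_congr rfl fun l _ => ?_
    split_ifs <;> omega
  have e2 : Dsum' A a a = Dsum' A a b + S1' := by
    rw [Dsum', Dsum', hS1', sum2_add]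
    refine Finset.sum_congr rfl fun k _ => Finset.sum_congr rfl fun l _ => ?_
    split_ifs <;> omega
  have e3 : Dsum A b b = Dsum A a b + S2 := by
    rw [Dsum, Dsum, hS2, sum2_add]
    refine Finset.sum_congr rfl fun k _ => Finset.sum_congr rfl fun l _ => ?_
    split_ifs <;> omega
  have e4 : Dsum' A b b = Dsum' A a b + S2' := by
    rw [Dsum', Dsum', hS2', sum2_add]
    refine Finset.sum_congr rfl fun k _ => Finset.sum_congr rfl fun l _ => ?_
    split_ifs <;> omega
  have z12 : S1 = 0 ∨ S2 = 0 := by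
    by_contra hc
    push_neg at hc
    obtain ⟨k, l, hkl, hne⟩ := exists_entry hc.1
    obtain ⟨k', l', hkl', hne'⟩ := exists_entry hc.2
    have hkk : k < k' := by rw [Fin.lt_def]; omega
    have hll : l < l' := by rw [Fin.lt_def]; omega
    rcases hA k k' l l' hkk hll with h0 | h0 <;> [exact hne h0; exact hne' h0]
  have z12' : S1' = 0 ∨ S2' = 0 := by
    by_contra hc
    push_neg at hc
    obtain ⟨k, l, hkl, hne⟩ := exists_entry hc.1
    obtain ⟨k', l', hkl', hne'⟩ := exists_entry hc.2
    have hkk : k < k' := by rw [Fin.lt_def]; omega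
    have hll : l < l' := by rw [Fin.lt_def]; omega
    rcases hA k k' l l' hkk hll with h0 | h0 <;> [exact hne h0; exact hne' h0]
  have r1 := RC A h a
  have r2 := RC A h b
  omega

lemma singleton_sum (A : Matrix (Fin n) (Fin n) ℕ) (i j : Fin n) :
    (∑ k : Fin n, ∑ l : Fin n, if k.val = i.val ∧ l.val = j.val then A k l else 0) = A i j := by
  have : ∀ k l : Fin n, (if k.val = i.val ∧ l.val = j.val then A k l else 0) =
      if k = i then (if l = j then A k l else 0) else 0 := by
    intro k l
    by_cases h1 : k = i <;> by_cases h2 : l = j <;>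
      simp_all [Fin.ext_iff]
  simp only [this]
  simp

lemma key (A : Matrix (Fin n) (Fin n) ℕ) (i j : Fin n) :
    Dsum A (i.val + 1) j.val + Dsum A i.val (j.val + 1) =
      Dsum A i.val j.val + Dsum A (i.val + 1) (j.val + 1) + A i j := by
  have := singleton_sum A i j
  rw [Dsum, Dsum, Dsum, Dsum, sum2_add, ← this, sum2_add, sum2_add]
  refine Finset.sum_congr rfl fun k _ => Finset.sum_congr rfl fun l _ => ?_
  split_ifs <;> omega

lemma key' (A : Matrix (Fin n) (Fin n) ℕ) (i j : Fin n) :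
    Dsum' A (i.val + 1) j.val + Dsum' A i.val (j.val + 1) =
      Dsum' A i.val j.val + Dsum' A (i.val + 1) (j.val + 1) + A j i := by
  have hs : (∑ k : Fin n, ∑ l : Fin n, if k.val = j.val ∧ l.val = i.val then A k l else 0)
      = A j i := singleton_sum A j i
  rw [Dsum', Dsum', Dsum', Dsum', sum2_add, ← hs, sum2_add, sum2_add]
  refine Finset.sum_congr rfl fun k _ => Finset.sum_congr rfl fun l _ => ?_
  split_ifs <;> omega

lemma main_lt (A : Matrix (Fin n) (Fin n) ℕ) (hA : Generic A)
    (h : ∀ i, ∑ j, A i j = ∑ j, A j i) {i j : Fin n} (hij : i < j) :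
    A i j = A j i := by
  have hij' : i.val < j.val := hij
  have k1 := key A i j
  have k2 := key' A i j
  have d1 := DD' A hA h (i.val + 1) j.val (by omega)
  have d2 := DD' A hA h i.val (j.val + 1) (by omega)
  have d3 := DD' A hA h i.val j.val (by omega)
  have d4 := DD' A hA h (i.val + 1) (j.val + 1) (by omega)
  omega

end Aux

theorem stmt3 {n : ℕ} (A : Matrix (Fin n) (Fin n) ℕ) (hA : Generic A)
    (h : ∀ i, ∑ j, A i j = ∑ j, A j i) :
    ∀ i j, A i j = A j i := by
  intro i j
  rcases lt_trichotomy i j with hij | rfl | hij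
  · exact main_lt A hA h hij
  · rfl
  · exact (main_lt A hA h hij).symm
end

section
/- Let λ = (λ_1,…,λ_n) and μ = (μ_1,…,μ_n) be vectors of nonnegative integers with Σ_i λ_i = Σ_i μ_i = r. Then there exists exactly one generic n×n matrix A over ℕ with row-sum vector λ and column-sum vector μ. -/
open Finset

section stmt5aux
variable {n : ℕ}

/-- Partial sum of the first `i` entries of `lam`. -/
def Lsum (lam : Fin n → ℕ) (i : ℕ) : ℕ := ∑ k : Fin n, if (k : ℕ) < i then lam k else 0

/-- Tail sum of the entries of `mu` with index at least `j`. -/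
def Msum (mu : Fin n → ℕ) (j : ℕ) : ℕ := ∑ k : Fin n, if j ≤ (k : ℕ) then mu k else 0

lemma Lsum_zero (lam : Fin n → ℕ) : Lsum lam 0 = 0 := by simp [Lsum]

lemma Lsum_top (lam : Fin n → ℕ) : Lsum lam n = ∑ i, lam i := by
  unfold Lsum; exact Finset.sum_congr rfl fun k _ => by simp [k.isLt]

lemma Msum_top (mu : Fin n → ℕ) : Msum mu n = 0 := by
  unfold Msum; exact Finset.sum_eq_zero fun k _ => by simp [Nat.not_le.mpr k.isLt]

lemma Msum_zero (mu : Fin n → ℕ) : Msum mu 0 = ∑ i, mu i := by simp [Msum]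

lemma Lsum_mono (lam : Fin n → ℕ) {i i' : ℕ} (h : i ≤ i') : Lsum lam i ≤ Lsum lam i' := by
  refine Finset.sum_le_sum fun k _ => ?_; split_ifs with h1 h2 <;> omega

lemma Msum_anti (mu : Fin n → ℕ) {j j' : ℕ} (h : j ≤ j') : Msum mu j' ≤ Msum mu j := by
  refine Finset.sum_le_sum fun k _ => ?_; split_ifs with h1 h2 <;> omega

lemma Lsum_succ (lam : Fin n → ℕ) (i : Fin n) :
    Lsum lam ((i : ℕ) + 1) = Lsum lam i + lam i := by
  unfold Lsum
  have key : ∀ k : Fin n, (if (k : ℕ) < (i : ℕ) + 1 then lam k else 0)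
      = (if (k : ℕ) < (i : ℕ) then lam k else 0) + (if k = i then lam k else 0) := by
    intro k; have := Fin.val_eq_val k i; split_ifs <;> omega
  rw [Finset.sum_congr rfl fun k _ => key k, Finset.sum_add_distrib,
    Finset.sum_ite_eq' Finset.univ i lam]
  simp

lemma Msum_succ (mu : Fin n → ℕ) (j : Fin n) :
    Msum mu j = mu j + Msum mu ((j : ℕ) + 1) := by
  unfold Msum
  have key : ∀ k : Fin n, (if (j : ℕ) ≤ (k : ℕ) then mu k else 0)
      = (if k = j then mu k else 0) + (if (j : ℕ) + 1 ≤ (k : ℕ) then mu k else 0) := by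
    intro k; have := Fin.val_eq_val k j; split_ifs <;> omega
  rw [Finset.sum_congr rfl fun k _ => key k, Finset.sum_add_distrib,
    Finset.sum_ite_eq' Finset.univ j mu]
  simp

lemma exists_step_up (f : ℕ → ℕ) (m x : ℕ) (h0 : f 0 ≤ x) (hm : x < f m) :
    ∃ j < m, f j ≤ x ∧ x < f (j + 1) := by
  induction m with
  | zero => omega
  | succ m ih =>
    by_cases h : x < f m
    · obtain ⟨j, hj, h1, h2⟩ := ih h; exact ⟨j, by omega, h1, h2⟩
    · exact ⟨m, by omega, by omega, hm⟩

lemma exists_step_down (f : ℕ → ℕ) (m x : ℕ) (h0 : x < f 0) (hm : f m ≤ x) :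
    ∃ j < m, f (j + 1) ≤ x ∧ x < f j := by
  induction m with
  | zero => omega
  | succ m ih =>
    by_cases h : f m ≤ x
    · obtain ⟨j, hj, h1, h2⟩ := ih h; exact ⟨j, by omega, h1, h2⟩
    · exact ⟨m, by omega, hm, by omega⟩

lemma disj_Ico {a b c d : ℕ} (h : b ≤ c ∨ d ≤ a) : Disjoint (Finset.Ico a b) (Finset.Ico c d) :=
  Finset.disjoint_left.mpr fun x hx hx' => by
    rw [Finset.mem_Ico] at hx hx'; omega

/-- The canonical generic matrix with row sums `lam` and column sums `mu`. -/
def canMat (lam mu : Fin n → ℕ) : Matrix (Fin n) (Fin n) ℕ :=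
  fun i j => ((Finset.Ico (Lsum lam i) (Lsum lam ((i : ℕ) + 1))) ∩
    (Finset.Ico (Msum mu ((j : ℕ) + 1)) (Msum mu j))).card

lemma sum_card_inter {S : Finset ℕ} {T : Fin n → Finset ℕ}
    (hdisj : ∀ j l : Fin n, j ≠ l → Disjoint (T j) (T l))
    (hcov : ∀ x ∈ S, ∃ j, x ∈ T j) :
    ∑ j, (S ∩ T j).card = S.card := by
  rw [← Finset.card_biUnion (fun j _ l _ hjl =>
    Finset.disjoint_left.mpr fun x hx hx' =>
      (Finset.disjoint_left.mp (hdisj j l hjl)) (Finset.mem_inter.mp hx).2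
        (Finset.mem_inter.mp hx').2)]
  congr 1
  ext x
  simp only [Finset.mem_biUnion, Finset.mem_univ, true_and, Finset.mem_inter]
  exact ⟨fun ⟨j, hx, _⟩ => hx, fun hx => (hcov x hx).elim fun j hj => ⟨j, hx, hj⟩⟩

lemma canMat_generic (lam mu : Fin n → ℕ) : Generic (canMat lam mu) := by
  intro i k j l hik hjl
  by_contra hc
  push_neg at hc
  obtain ⟨h1, h2⟩ := hc
  obtain ⟨x, hx⟩ := Finset.card_pos.mp (Nat.pos_of_ne_zero h1)
  obtain ⟨y, hy⟩ := Finset.card_pos.mp (Nat.pos_of_ne_zero h2)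
  simp only [Finset.mem_inter, Finset.mem_Ico] at hx hy
  have hL : Lsum lam ((i : ℕ) + 1) ≤ Lsum lam k := Lsum_mono lam hik
  have hM : Msum mu (l : ℕ) ≤ Msum mu ((j : ℕ) + 1) := Msum_anti mu hjl
  omega

lemma canMat_row (lam mu : Fin n → ℕ) (h : ∑ i, lam i = ∑ i, mu i) (i : Fin n) :
    ∑ j, canMat lam mu i j = lam i := by
  unfold canMat
  rw [sum_card_inter]
  · rw [Nat.card_Ico, Lsum_succ]; omega
  · intro j l hjl
    rcases Ne.lt_or_gt hjl with h' | h'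
    · exact disj_Ico (by
        have := Msum_anti mu (show (j:ℕ)+1 ≤ (l:ℕ) from h'); omega)
    · exact disj_Ico (by
        have := Msum_anti mu (show (l:ℕ)+1 ≤ (j:ℕ) from h'); omega)
  · intro x hx
    rw [Finset.mem_Ico] at hx
    have hn : x < Msum mu 0 := by
      have h1 : Lsum lam ((i:ℕ)+1) ≤ Lsum lam n := Lsum_mono lam i.isLt
      rw [Lsum_top] at h1; rw [Msum_zero]; omega
    have h0 : Msum mu n ≤ x := by rw [Msum_top]; omega
    obtain ⟨j, hj, hj1, hj2⟩ := exists_step_down (Msum mu) n x hn h0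
    exact ⟨⟨j, hj⟩, Finset.mem_Ico.mpr ⟨hj1, hj2⟩⟩

lemma canMat_col (lam mu : Fin n → ℕ) (h : ∑ i, lam i = ∑ i, mu i) (j : Fin n) :
    ∑ i, canMat lam mu i j = mu j := by
  unfold canMat
  have hcomm : ∀ i : Fin n, ((Finset.Ico (Lsum lam i) (Lsum lam ((i : ℕ) + 1))) ∩
      (Finset.Ico (Msum mu ((j : ℕ) + 1)) (Msum mu j))).card
      = ((Finset.Ico (Msum mu ((j : ℕ) + 1)) (Msum mu j)) ∩
      (Finset.Ico (Lsum lam i) (Lsum lam ((i : ℕ) + 1)))).card := by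
    intro i; rw [Finset.inter_comm]
  rw [Finset.sum_congr rfl fun i _ => hcomm i, sum_card_inter]
  · rw [Nat.card_Ico]
    have := Msum_succ mu j; omega
  · intro i k hik
    rcases Ne.lt_or_gt hik with h' | h'
    · exact disj_Ico (by
        have := Lsum_mono lam (show (i:ℕ)+1 ≤ (k:ℕ) from h'); omega)
    · exact disj_Ico (by
        have := Lsum_mono lam (show (k:ℕ)+1 ≤ (i:ℕ) from h'); omega)
  · intro x hx
    rw [Finset.mem_Ico] at hx
    have hn : x < Lsum lam n := by
      have h1 : Msum mu (j:ℕ) ≤ Msum mu 0 := Msum_anti mu (Nat.zero_le _)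
      rw [Msum_zero] at h1; rw [Lsum_top]; omega
    have h0 : Lsum lam 0 ≤ x := by rw [Lsum_zero]; omega
    obtain ⟨i, hi, hi1, hi2⟩ := exists_step_up (Lsum lam) n x h0 hn
    exact ⟨⟨i, hi⟩, Finset.mem_Ico.mpr ⟨hi1, hi2⟩⟩

/-- Corner sums: total of entries in rows `< i` and columns `≥ j`. -/
def Bsum (A : Matrix (Fin n) (Fin n) ℕ) (i j : ℕ) : ℕ :=
  ∑ i' : Fin n, ∑ j' : Fin n, if (i' : ℕ) < i ∧ j ≤ (j' : ℕ) then A i' j' else 0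

lemma Bsum_le_L (A : Matrix (Fin n) (Fin n) ℕ) (lam : Fin n → ℕ)
    (hrow : ∀ i, ∑ j, A i j = lam i) (i j : ℕ) : Bsum A i j ≤ Lsum lam i := by
  unfold Bsum Lsum
  refine Finset.sum_le_sum fun i' _ => ?_
  by_cases h : (i' : ℕ) < i
  · simp only [h, if_true, true_and]
    calc ∑ j' : Fin n, (if j ≤ (j' : ℕ) then A i' j' else 0)
        ≤ ∑ j' : Fin n, A i' j' := Finset.sum_le_sum fun j' _ => by split_ifs <;> omega
      _ = lam i' := hrow i'
  · simp [h]

lemma Bsum_le_M (A : Matrix (Fin n) (Fin n) ℕ) (mu : Fin n → ℕ)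
    (hcol : ∀ j, ∑ i, A i j = mu j) (i j : ℕ) : Bsum A i j ≤ Msum mu j := by
  unfold Bsum Msum
  rw [Finset.sum_comm]
  refine Finset.sum_le_sum fun j' _ => ?_
  by_cases h : j ≤ (j' : ℕ)
  · calc ∑ i' : Fin n, (if (i' : ℕ) < i ∧ j ≤ (j' : ℕ) then A i' j' else 0)
        ≤ ∑ i' : Fin n, A i' j' := Finset.sum_le_sum fun i' _ => by split_ifs <;> omega
      _ = mu j' := hcol j'
      _ ≤ _ := by simp [h]
  · simp [h]

lemma Bsum_eq_min (A : Matrix (Fin n) (Fin n) ℕ) (lam mu : Fin n → ℕ)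
    (hg : Generic A) (hrow : ∀ i, ∑ j, A i j = lam i) (hcol : ∀ j, ∑ i, A i j = mu j)
    (i j : ℕ) : Bsum A i j = min (Lsum lam i) (Msum mu j) := by
  have hL := Bsum_le_L A lam hrow i j
  have hM := Bsum_le_M A mu hcol i j
  by_cases hX : ∀ i' j' : Fin n, (i' : ℕ) < i → (j' : ℕ) < j → A i' j' = 0
  · have hB : Bsum A i j = Lsum lam i := by
      unfold Bsum Lsum
      refine Finset.sum_congr rfl fun i' _ => ?_
      by_cases h : (i' : ℕ) < i
      · simp only [h, if_true, true_and]
        rw [← hrow i']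
        refine Finset.sum_congr rfl fun j' _ => ?_
        by_cases h2 : j ≤ (j' : ℕ)
        · simp [h2]
        · simp [h2, hX i' j' h (by omega)]
      · simp [h]
    omega
  · push_neg at hX
    obtain ⟨i1, j1, hi1, hj1, hne⟩ := hX
    have hY : ∀ i' j' : Fin n, i ≤ (i' : ℕ) → j ≤ (j' : ℕ) → A i' j' = 0 := by
      intro i' j' hi' hj'
      rcases hg i1 i' j1 j' (by omega) (by omega) with h' | h'
      · exact absurd h' hne
      · exact h'
    have hB : Bsum A i j = Msum mu j := by
      unfold Bsum Msum
      rw [Finset.sum_comm]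
      refine Finset.sum_congr rfl fun j' _ => ?_
      by_cases h : j ≤ (j' : ℕ)
      · simp only [h, if_true, and_true]
        rw [← hcol j']
        refine Finset.sum_congr rfl fun i' _ => ?_
        by_cases h2 : (i' : ℕ) < i
        · simp [h2]
        · simp [h2, hY i' j' (by omega) h]
      · simp [h]
    omega

lemma Bsum_cross (A : Matrix (Fin n) (Fin n) ℕ) (i j : Fin n) :
    Bsum A ((i : ℕ) + 1) (j : ℕ) + Bsum A (i : ℕ) ((j : ℕ) + 1)
      = Bsum A (i : ℕ) (j : ℕ) + Bsum A ((i : ℕ) + 1) ((j : ℕ) + 1) + A i j := by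
  unfold Bsum
  have key : ∀ i' j' : Fin n,
      (if (i' : ℕ) < (i : ℕ) + 1 ∧ (j : ℕ) ≤ (j' : ℕ) then A i' j' else 0)
      + (if (i' : ℕ) < (i : ℕ) ∧ (j : ℕ) + 1 ≤ (j' : ℕ) then A i' j' else 0)
      = (if (i' : ℕ) < (i : ℕ) ∧ (j : ℕ) ≤ (j' : ℕ) then A i' j' else 0)
      + (if (i' : ℕ) < (i : ℕ) + 1 ∧ (j : ℕ) + 1 ≤ (j' : ℕ) then A i' j' else 0)
      + (if (i' : ℕ) = (i : ℕ) ∧ (j' : ℕ) = (j : ℕ) then A i' j' else 0) := by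
    intro i' j'; split_ifs <;> omega
  calc ∑ i' : Fin n, ∑ j' : Fin n, (if (i' : ℕ) < (i : ℕ) + 1 ∧ (j : ℕ) ≤ (j' : ℕ) then A i' j' else 0)
      + ∑ i' : Fin n, ∑ j' : Fin n, (if (i' : ℕ) < (i : ℕ) ∧ (j : ℕ) + 1 ≤ (j' : ℕ) then A i' j' else 0)
      = ∑ i' : Fin n, ∑ j' : Fin n,
        ((if (i' : ℕ) < (i : ℕ) ∧ (j : ℕ) ≤ (j' : ℕ) then A i' j' else 0)
        + (if (i' : ℕ) < (i : ℕ) + 1 ∧ (j : ℕ) + 1 ≤ (j' : ℕ) then A i' j' else 0)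
        + (if (i' : ℕ) = (i : ℕ) ∧ (j' : ℕ) = (j : ℕ) then A i' j' else 0)) := by
        rw [← Finset.sum_add_distrib]
        refine Finset.sum_congr rfl fun i' _ => ?_
        rw [← Finset.sum_add_distrib]
        exact Finset.sum_congr rfl fun j' _ => key i' j'
    _ = _ := by
        simp only [Finset.sum_add_distrib]
        congr 1
        have h1 : ∀ i' j' : Fin n, (if (i' : ℕ) = (i : ℕ) ∧ (j' : ℕ) = (j : ℕ) then A i' j' else 0)
            = (if i' = i ∧ j' = j then A i' j' else 0) := by
          intro i' j'
          simp only [Fin.val_eq_val]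
        rw [Finset.sum_congr rfl fun i' _ => Finset.sum_congr rfl fun j' _ => h1 i' j']
        have h2 : ∀ i' : Fin n, (∑ j' : Fin n, if i' = i ∧ j' = j then A i' j' else 0)
            = if i' = i then A i' j else 0 := by
          intro i'
          by_cases h : i' = i
          · simp only [h, true_and, if_true]
            rw [Finset.sum_ite_eq' Finset.univ j (A i)]; simp
          · simp [h]
        rw [Finset.sum_congr rfl fun i' _ => h2 i', Finset.sum_ite_eq' Finset.univ i (A · j)]
        simp

end stmt5aux

theorem stmt5 {n r : ℕ} (lam mu : Fin n → ℕ)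
    (h1 : ∑ i, lam i = r) (h2 : ∑ i, mu i = r) :
    ∃! A : Matrix (Fin n) (Fin n) ℕ,
      Generic A ∧ (∀ i, ∑ j, A i j = lam i) ∧ (∀ i, ∑ j, A j i = mu i) := by
  have htot : ∑ i, lam i = ∑ i, mu i := by omega
  refine ⟨canMat lam mu, ⟨canMat_generic lam mu, canMat_row lam mu htot,
    canMat_col lam mu htot⟩, ?_⟩
  rintro A ⟨hg, hrow, hcol⟩
  have hBA := Bsum_eq_min A lam mu hg hrow hcol
  have hBC := Bsum_eq_min (canMat lam mu) lam mu (canMat_generic lam mu)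
    (canMat_row lam mu htot) (canMat_col lam mu htot)
  funext i j
  have c1 := Bsum_cross A i j
  have c2 := Bsum_cross (canMat lam mu) i j
  rw [hBA, hBA, hBA, hBA] at c1
  rw [hBC, hBC, hBC, hBC] at c2
  omega
end

section
/- Let λ and μ be vectors of nonnegative integers of length n with equal total sum r. Then there exists exactly one n×n matrix A over ℕ with row-sum vector λ and column-sum vector μ such that for all row indices i < k and column indices j < l, at least one of the anti-diagonal entries a_{il}, a_{kj} is zero. -/
open Finset

/-- A matrix is anti-generic if every 2×2 submatrix has a zero anti-diagonal entry. -/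
def AntiGeneric {n : ℕ} (A : Matrix (Fin n) (Fin n) ℕ) : Prop :=
  ∀ i k j l : Fin n, i < k → j < l → A i l = 0 ∨ A k j = 0

namespace Stmt6Aux

/-- extend a `Fin n`-indexed family to `ℕ` by zero -/
def ext {n : ℕ} (f : Fin n → ℕ) (t : ℕ) : ℕ := if h : t < n then f ⟨t, h⟩ else 0

/-- partial sums -/
def psum {n : ℕ} (f : Fin n → ℕ) (i : ℕ) : ℕ := ∑ t ∈ Finset.range i, ext f t

lemma psum_mono {n : ℕ} (f : Fin n → ℕ) : Monotone (psum f) := fun a b h =>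
  Finset.sum_le_sum_of_subset (Finset.range_subset_range.2 h)

lemma psum_succ {n : ℕ} (f : Fin n → ℕ) (i : ℕ) :
    psum f (i + 1) = psum f i + ext f i := Finset.sum_range_succ _ _

lemma psum_zero {n : ℕ} (f : Fin n → ℕ) : psum f 0 = 0 := rfl

lemma psum_n {n : ℕ} (f : Fin n → ℕ) : psum f n = ∑ i, f i := by
  rw [psum, ← Fin.sum_univ_eq_sum_range (fun t => ext f t) n]
  exact Finset.sum_congr rfl fun a _ => by simp [ext, a.isLt]

lemma indsum {n : ℕ} (f : Fin n → ℕ) {i : ℕ} (hi : i ≤ n) :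
    ∑ a : Fin n, (if a.val < i then f a else 0) = psum f i := by
  have h1 : ∑ a : Fin n, (if a.val < i then f a else 0)
      = ∑ t ∈ Finset.range n, (if t < i then ext f t else 0) := by
    rw [← Fin.sum_univ_eq_sum_range (fun t => if t < i then ext f t else 0) n]
    exact Finset.sum_congr rfl fun a _ => by simp [ext, a.isLt]
  have h2 : Finset.range i = (Finset.range n).filter (fun t => t < i) := by
    ext t; simp [Finset.mem_range]; omega
  rw [h1, psum, h2, Finset.sum_filter]

/-- the canonical staircase matrix -/
def cmat {n : ℕ} (lam mu : Fin n → ℕ) : Matrix (Fin n) (Fin n) ℕ :=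
  fun i j => min (psum lam (i.val + 1)) (psum mu (j.val + 1)) -
    max (psum lam i.val) (psum mu j.val)

lemma cmat_antiGeneric {n : ℕ} (lam mu : Fin n → ℕ) : AntiGeneric (cmat lam mu) := by
  intro i k j l hik hjl
  by_contra h
  push_neg at h
  obtain ⟨h1, h2⟩ := h
  have hL : psum lam (i.val + 1) ≤ psum lam k.val := psum_mono lam hik
  have hM : psum mu (j.val + 1) ≤ psum mu l.val := psum_mono mu hjl
  simp only [cmat] at h1 h2
  omega

lemma cmat_rowsum {n : ℕ} (lam mu : Fin n → ℕ) (hs : ∑ i, lam i = ∑ i, mu i) (i : Fin n) :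
    ∑ j, cmat lam mu i j = lam i := by
  let g : ℕ → ℕ := fun t => max (psum lam i.val) (min (psum lam (i.val + 1)) (psum mu t))
  have hmono : Monotone g := by
    intro a b h
    have := psum_mono mu h
    simp only [g]
    omega
  have hLL : psum lam i.val ≤ psum lam (i.val + 1) := psum_mono lam (Nat.le_succ _)
  have hAg : ∀ j : Fin n, cmat lam mu i j = g (j.val + 1) - g j.val := by
    intro j
    have hMM : psum mu j.val ≤ psum mu (j.val + 1) := psum_mono mu (Nat.le_succ _)
    simp only [cmat, g]
    omega
  calc ∑ j, cmat lam mu i j = ∑ j : Fin n, (g (j.val + 1) - g j.val) :=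
        Finset.sum_congr rfl fun j _ => hAg j
    _ = ∑ t ∈ Finset.range n, (g (t + 1) - g t) :=
        Fin.sum_univ_eq_sum_range (fun t => g (t + 1) - g t) n
    _ = g n - g 0 := Finset.sum_range_tsub hmono n
    _ = lam i := by
        have hMn : psum mu n = ∑ t, mu t := psum_n mu
        have hM0 : psum mu 0 = 0 := psum_zero mu
        have hLn : psum lam (i.val + 1) ≤ ∑ t, mu t := by
          rw [← hs, ← psum_n lam]; exact psum_mono lam i.isLt
        have hsucc : psum lam (i.val + 1) = psum lam i.val + lam i := by
          rw [psum_succ]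
          congr 1
          simp [ext, i.isLt]
        simp only [g, hMn, hM0]
        omega

lemma cmat_symm {n : ℕ} (lam mu : Fin n → ℕ) (i j : Fin n) :
    cmat lam mu i j = cmat mu lam j i := by
  simp only [cmat]
  omega

/-- rectangular partial sums of a matrix -/
def S {n : ℕ} (B : Matrix (Fin n) (Fin n) ℕ) (i j : ℕ) : ℕ :=
  ∑ a : Fin n, ∑ b : Fin n, if a.val < i ∧ b.val < j then B a b else 0

lemma S_le_row {n : ℕ} (B : Matrix (Fin n) (Fin n) ℕ) (lam : Fin n → ℕ)
    (hrow : ∀ a, ∑ b, B a b = lam a) {i : ℕ} (hi : i ≤ n) (j : ℕ) :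
    S B i j ≤ psum lam i := by
  rw [← indsum lam hi]
  apply Finset.sum_le_sum
  intro a _
  by_cases ha : a.val < i
  · simp only [ha, if_true, ← hrow a]
    apply Finset.sum_le_sum
    intro b _
    split_ifs <;> simp
  · simp [ha]

lemma S_le_col {n : ℕ} (B : Matrix (Fin n) (Fin n) ℕ) (mu : Fin n → ℕ)
    (hcol : ∀ b, ∑ a, B a b = mu b) (i : ℕ) {j : ℕ} (hj : j ≤ n) :
    S B i j ≤ psum mu j := by
  rw [← indsum mu hj, S, Finset.sum_comm]
  apply Finset.sum_le_sum
  intro b _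
  by_cases hb : b.val < j
  · simp only [hb, and_true, ← hcol b]
    apply Finset.sum_le_sum
    intro a _
    split_ifs <;> simp
  · simp [hb]

lemma S_min {n : ℕ} (B : Matrix (Fin n) (Fin n) ℕ) (lam mu : Fin n → ℕ)
    (hAG : AntiGeneric B) (hrow : ∀ a, ∑ b, B a b = lam a)
    (hcol : ∀ b, ∑ a, B a b = mu b) {i j : ℕ} (hi : i ≤ n) (hj : j ≤ n) :
    S B i j = min (psum lam i) (psum mu j) := by
  have h1 := S_le_row B lam hrow hi j
  have h2 := S_le_col B mu hcol i hj
  by_cases hcase : ∀ a b : Fin n, a.val < i → j ≤ b.val → B a b = 0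
  · -- top-right block vanishes: S = psum lam i
    have hS : S B i j = psum lam i := by
      rw [← indsum lam hi]
      apply Finset.sum_congr rfl
      intro a _
      by_cases ha : a.val < i
      · simp only [ha, if_true, true_and, ← hrow a]
        apply Finset.sum_congr rfl
        intro b _
        by_cases hb : b.val < j
        · simp [hb]
        · simp [hb, hcase a b ha (le_of_not_gt hb)]
      · simp [ha]
    omega
  · push_neg at hcase
    obtain ⟨a, l, ha, hl, hBal⟩ := hcase
    have hbl : ∀ k b : Fin n, i ≤ k.val → b.val < j → B k b = 0 := by
      intro k b hk hb
      have hak : a < k := by rw [Fin.lt_def]; omega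
      have hbl' : b < l := by rw [Fin.lt_def]; omega
      rcases hAG a k b l hak hbl' with h | h
      · exact absurd h hBal
      · exact h
    have hS : S B i j = psum mu j := by
      rw [← indsum mu hj, S, Finset.sum_comm]
      apply Finset.sum_congr rfl
      intro b _
      by_cases hb : b.val < j
      · simp only [hb, and_true, ← hcol b]
        apply Finset.sum_congr rfl
        intro k _
        by_cases hk : k.val < i
        · simp [hk]
        · simp [hk, hbl k b (le_of_not_gt hk) hb]
      · simp [hb]
    omega

lemma quad {n : ℕ} (B : Matrix (Fin n) (Fin n) ℕ) (i j : Fin n) :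
    S B (i.val + 1) (j.val + 1) + S B i.val j.val =
      S B (i.val + 1) j.val + S B i.val (j.val + 1) + B i j := by
  have key : ∀ a b : Fin n,
      (if a.val < i.val + 1 ∧ b.val < j.val + 1 then B a b else 0) +
        (if a.val < i.val ∧ b.val < j.val then B a b else 0) =
      ((if a.val < i.val + 1 ∧ b.val < j.val then B a b else 0) +
        (if a.val < i.val ∧ b.val < j.val + 1 then B a b else 0)) +
        (if a = i then (if b = j then B a b else 0) else 0) := by
    intro a b
    have hai : a = i ↔ a.val = i.val := Fin.ext_iff
    have hbj : b = j ↔ b.val = j.val := Fin.ext_iff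
    by_cases ha : a = i <;> by_cases hb : b = j <;>
      [skip; skip; skip; skip] <;>
      · first
        | (simp only [ha, hb, if_true]; split_ifs <;> omega)
        | (simp only [if_neg ha]; split_ifs <;> (try rw [hai] at ha) <;> (try rw [hbj] at hb) <;> omega)
        | (simp only [if_pos ha, if_neg hb]; split_ifs <;> (try rw [hai] at ha) <;> (try rw [hbj] at hb) <;> omega)
  have expand : S B (i.val + 1) (j.val + 1) + S B i.val j.val =
      (S B (i.val + 1) j.val + S B i.val (j.val + 1)) +
        ∑ a : Fin n, ∑ b : Fin n, (if a = i then (if b = j then B a b else 0) else 0) := by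
    simp only [S, ← Finset.sum_add_distrib]
    exact Finset.sum_congr rfl fun a _ =>
      Finset.sum_congr rfl fun b _ => key a b
  rw [expand]
  congr 1
  have h3 : ∀ a : Fin n, (∑ b : Fin n, if a = i then (if b = j then B a b else 0) else 0)
      = if a = i then B a j else 0 := by
    intro a
    by_cases h : a = i
    · simp [h, Finset.sum_ite_eq']
    · simp [h]
  rw [Finset.sum_congr rfl fun a _ => h3 a]
  simp [Finset.sum_ite_eq']

end Stmt6Aux

theorem stmt6 {n r : ℕ} (lam mu : Fin n → ℕ)
    (h1 : ∑ i, lam i = r) (h2 : ∑ i, mu i = r) :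
    ∃! A : Matrix (Fin n) (Fin n) ℕ,
      AntiGeneric A ∧ (∀ i, ∑ j, A i j = lam i) ∧ (∀ i, ∑ j, A j i = mu i) := by
  classical
  have hs : ∑ i, lam i = ∑ i, mu i := by rw [h1, h2]
  set A := Stmt6Aux.cmat lam mu with hA
  have hAG : AntiGeneric A := Stmt6Aux.cmat_antiGeneric lam mu
  have hrow : ∀ i, ∑ j, A i j = lam i := Stmt6Aux.cmat_rowsum lam mu hs
  have hcol : ∀ i, ∑ j, A j i = mu i := by
    intro i
    have he : ∀ j, A j i = Stmt6Aux.cmat mu lam i j := fun j => Stmt6Aux.cmat_symm lam mu j i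
    rw [Finset.sum_congr rfl fun j _ => he j]
    exact Stmt6Aux.cmat_rowsum mu lam hs.symm i
  refine ⟨A, ⟨hAG, hrow, hcol⟩, ?_⟩
  rintro B ⟨hBG, hBrow, hBcol⟩
  have key : ∀ (C : Matrix (Fin n) (Fin n) ℕ), AntiGeneric C →
      (∀ a, ∑ b, C a b = lam a) → (∀ b, ∑ a, C a b = mu b) → ∀ i j : Fin n,
      C i j + (min (Stmt6Aux.psum lam (i.val + 1)) (Stmt6Aux.psum mu j.val) +
          min (Stmt6Aux.psum lam i.val) (Stmt6Aux.psum mu (j.val + 1))) =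
        min (Stmt6Aux.psum lam (i.val + 1)) (Stmt6Aux.psum mu (j.val + 1)) +
          min (Stmt6Aux.psum lam i.val) (Stmt6Aux.psum mu j.val) := by
    intro C hCG hcr hcc i j
    have hi1 : i.val + 1 ≤ n := i.isLt
    have hj1 : j.val + 1 ≤ n := j.isLt
    have hi2 : i.val ≤ n := le_of_lt i.isLt
    have hj2 : j.val ≤ n := le_of_lt j.isLt
    have q := Stmt6Aux.quad C i j
    have m1 := Stmt6Aux.S_min C lam mu hCG hcr hcc hi1 hj1
    have m2 := Stmt6Aux.S_min C lam mu hCG hcr hcc hi1 hj2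
    have m3 := Stmt6Aux.S_min C lam mu hCG hcr hcc hi2 hj1
    have m4 := Stmt6Aux.S_min C lam mu hCG hcr hcc hi2 hj2
    omega
  ext i j
  have kB := key B hBG hBrow hBcol i j
  have kA := key A hAG hrow hcol i j
  omega
end

section
/- Let A be an n×n matrix over ℕ whose row-sum vector equals its column-sum vector. If A is both generic (every 2×2 submatrix has a zero main-diagonal entry) and anti-generic (every 2×2 submatrix has a zero anti-diagonal entry), then A is a diagonal matrix. -/
open Finset

theorem stmt7 {n : ℕ} (A : Matrix (Fin n) (Fin n) ℕ)
    (h : ∀ i, ∑ j, A i j = ∑ j, A j i)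
    (hg : Generic A) (hag : AntiGeneric A) :
    ∀ i j, i ≠ j → A i j = 0 := by
  have key : ∀ a b c d : Fin n, A a b ≠ 0 → A c d ≠ 0 → a = c ∨ b = d := by
    intro a b c d hab hcd
    rcases lt_trichotomy a c with hac | hac | hac
    · rcases lt_trichotomy b d with hbd | hbd | hbd
      · rcases hg a c b d hac hbd with h1 | h1 <;> simp_all
      · exact Or.inr hbd
      · rcases hag a c d b hac hbd with h1 | h1 <;> simp_all
    · exact Or.inl hac
    · rcases lt_trichotomy b d with hbd | hbd | hbd
      · rcases hag c a b d hac hbd with h1 | h1 <;> simp_all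
      · exact Or.inr hbd
      · rcases hg c a d b hac hbd with h1 | h1 <;> simp_all
  intro i j hij
  by_contra hA
  have hsumj : ∑ k, A j k ≠ 0 := by
    rw [h j]
    intro h0
    exact hA (Finset.sum_eq_zero_iff.mp h0 i (Finset.mem_univ i))
  obtain ⟨k, -, hk⟩ := Finset.exists_ne_zero_of_sum_ne_zero hsumj
  have hkj : k = j := by
    rcases key j k i j hk hA with h1 | h1
    · exact absurd h1.symm hij
    · exact h1
  subst hkj
  have hcol : ∑ x, A x i = 0 := by
    apply Finset.sum_eq_zero
    intro x _
    by_contra hx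
    have h1 : x = k ∨ i = k := key x i k k hx hk
    have h2 : x = i ∨ i = k := key x i i k hx hA
    rcases h1 with h1 | h1 <;> rcases h2 with h2 | h2 <;> simp_all
  have hrow : ∑ x, A i x = 0 := by rw [h i]; exact hcol
  exact hA (Finset.sum_eq_zero_iff.mp hrow k (Finset.mem_univ k))
end

section
/- The number of n×n matrices with entries in ℕ whose entries sum to r and which have at least one zero diagonal entry equals Σ_{s=1}^{n} C(n, s) · C(n² + r − n − 1, r + s − n), where C denotes the binomial coefficient (interpreted as 0 when the lower argument is negative). Equivalently, for each s, the number of such matrices with exactly s zero diagonal entries is C(n,s) · C(n² + r − n − 1, r + s − n). -/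
open Finset

variable {α : Type*} [Fintype α] [DecidableEq α]

lemma cnt0 (k : ℕ) :
    Nat.card {f : α → ℕ // ∑ i, f i = k} = (Fintype.card α + k - 1).choose k := by
  have e : {f : α → ℕ // ∑ i, f i = k} ≃ ↥(Finset.piAntidiag (univ : Finset α) k) :=
    Equiv.subtypeEquivRight (fun f => by simp)
  rw [Nat.card_congr e, Nat.card_eq_finsetCard, ← Finset.map_sym_eq_piAntidiag,
    Finset.card_map, Finset.sym_univ, Finset.card_univ, Sym.card_sym_eq_choose]

instance fin0 (k : ℕ) : Finite {f : α → ℕ // ∑ i, f i = k} :=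
  Finite.of_equiv _ (Equiv.subtypeEquivRight (fun f =>
    (by simp : f ∈ Finset.piAntidiag (univ : Finset α) k ↔ ∑ i, f i = k)))

instance fin1 (k : ℕ) (p : (α → ℕ) → Prop) : Finite {f : α → ℕ // ∑ i, f i = k ∧ p f} :=
  Finite.of_injective (fun x => (⟨x.1, x.2.1⟩ : {f : α → ℕ // ∑ i, f i = k}))
    (fun a b h => by
      simp only [Subtype.mk.injEq] at h
      exact Subtype.ext h)

lemma cnt1 (P : Finset α) (k : ℕ) :
    Nat.card {f : α → ℕ // ∑ i, f i = k ∧ ∀ a ∈ P, f a ≠ 0}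
      = if P.card ≤ k then (Fintype.card α + (k - P.card) - 1).choose (k - P.card) else 0 := by
  split_ifs with h
  · -- equiv with unconstrained sums to k - P.card
    have e : {f : α → ℕ // ∑ i, f i = k - P.card} ≃
        {f : α → ℕ // ∑ i, f i = k ∧ ∀ a ∈ P, f a ≠ 0} := by
      have key : ∀ g : α → ℕ, ∑ a, (g a + if a ∈ P then 1 else 0) = (∑ a, g a) + P.card := by
        intro g
        rw [Finset.sum_add_distrib]
        congr 1
        simp
      refine Equiv.ofBijective
        (fun g => ⟨fun a => g.1 a + if a ∈ P then 1 else 0, ?_, ?_⟩) ⟨?_, ?_⟩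
      · rw [key, g.2]; omega
      · intro a ha; simp [ha]
      · rintro ⟨g₁, h₁⟩ ⟨g₂, h₂⟩ hg
        simp only [Subtype.mk.injEq] at hg ⊢
        funext a
        have := congrFun hg a
        omega
      · rintro ⟨f, hf, hfP⟩
        have hsum : ∑ a, (f a - if a ∈ P then 1 else 0) = k - P.card := by
          have := key (fun a => f a - if a ∈ P then 1 else 0)
          have hpt : ∀ a, (f a - if a ∈ P then 1 else 0) + (if a ∈ P then 1 else 0) = f a := by
            intro a; split_ifs with ha
            · have := hfP a ha; omega
            · omega
          rw [Finset.sum_congr rfl (fun a _ => hpt a), hf] at this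
          omega
        refine ⟨⟨fun a => f a - if a ∈ P then 1 else 0, hsum⟩, ?_⟩
        apply Subtype.ext
        funext a
        simp only
        split_ifs with ha
        · have := hfP a ha; omega
        · omega
    rw [← Nat.card_congr e, cnt0]
  · -- empty
    have : IsEmpty {f : α → ℕ // ∑ i, f i = k ∧ ∀ a ∈ P, f a ≠ 0} := by
      refine ⟨fun ⟨f, hf, hfP⟩ => ?_⟩
      have h1 : P.card ≤ ∑ a ∈ P, f a := by
        calc P.card = ∑ _a ∈ P, 1 := by simp
        _ ≤ ∑ a ∈ P, f a := Finset.sum_le_sum (fun a ha => Nat.one_le_iff_ne_zero.2 (hfP a ha))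
      have h2 : ∑ a ∈ P, f a ≤ ∑ a, f a :=
        Finset.sum_le_sum_of_subset (Finset.subset_univ P)
      omega
    simp [Nat.card_of_isEmpty]

lemma cnt2 (Z P : Finset α) (hZP : Disjoint Z P) (k : ℕ) :
    Nat.card {f : α → ℕ // ∑ i, f i = k ∧ (∀ a ∈ Z, f a = 0) ∧ (∀ a ∈ P, f a ≠ 0)}
      = if P.card ≤ k then
          ((Fintype.card α - Z.card) + (k - P.card) - 1).choose (k - P.card) else 0 := by
  classical
  set β := {a : α // a ∉ Z} with hβ
  set P' : Finset β := P.subtype (· ∉ Z) with hP'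
  have hPcard : P'.card = P.card := by
    rw [hP', Finset.card_subtype]
    congr 1
    exact Finset.filter_true_of_mem (fun a ha => Finset.disjoint_right.1 hZP ha)
  have hcardβ : Fintype.card β = Fintype.card α - Z.card := by
    simp [hβ, Fintype.card_subtype_compl, Fintype.card_coe]
  have e : {g : β → ℕ // ∑ i, g i = k ∧ ∀ b ∈ P', g b ≠ 0} ≃
      {f : α → ℕ // ∑ i, f i = k ∧ (∀ a ∈ Z, f a = 0) ∧ (∀ a ∈ P, f a ≠ 0)} := by
    have hsum : ∀ f : α → ℕ, (∀ a ∈ Z, f a = 0) → ∑ b : β, f b.1 = ∑ a, f a := by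
      intro f hZ
      rw [← Finset.sum_subtype (univ.filter (· ∉ Z)) (by simp) f]
      refine Finset.sum_subset (Finset.filter_subset _ _) ?_
      intro a _ ha
      simp only [Finset.mem_filter, Finset.mem_univ, true_and, not_not] at ha
      exact hZ a ha
    refine Equiv.ofBijective (fun g => ⟨fun a => if h : a ∈ Z then 0 else g.1 ⟨a, h⟩, ?_, ?_, ?_⟩)
      ⟨?_, ?_⟩
    · rw [← hsum _ (fun a ha => by simp [ha])]
      refine Eq.trans (Finset.sum_congr rfl fun b _ => ?_) g.2.1
      simp [b.2]
    · intro a ha; simp [ha]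
    · intro a ha
      have haZ : a ∉ Z := fun h => Finset.disjoint_left.1 hZP h ha
      simpa [haZ] using g.2.2 ⟨a, haZ⟩ (Finset.mem_subtype.2 ha)
    · rintro ⟨g₁, h₁⟩ ⟨g₂, h₂⟩ hg
      simp only [Subtype.mk.injEq] at hg ⊢
      funext b
      have := congrFun hg b.1
      simpa [b.2] using this
    · rintro ⟨f, hf, hfZ, hfP⟩
      refine ⟨⟨fun b => f b.1, ?_, ?_⟩, ?_⟩
      · rw [hsum f hfZ]; exact hf
      · intro b hb
        exact hfP b.1 (Finset.mem_subtype.1 hb)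
      · apply Subtype.ext
        funext a
        by_cases ha : a ∈ Z <;> simp [ha, hfZ a]
  rw [← Nat.card_congr e, cnt1, hPcard, hcardβ]

lemma natCard_sigma {ι : Type*} [Fintype ι] (f : ι → Type*) [∀ i, Finite (f i)] :
    Nat.card (Σ i, f i) = ∑ i, Nat.card (f i) := by
  letI : ∀ i, Fintype (f i) := fun i => Fintype.ofFinite _
  simp [Nat.card_eq_fintype_card, Fintype.card_sigma]

instance finM (n r : ℕ) (p : Matrix (Fin n) (Fin n) ℕ → Prop) :
    Finite {A : Matrix (Fin n) (Fin n) ℕ // (∑ i, ∑ j, A i j) = r ∧ p A} := by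
  refine Finite.of_injective
    (fun A => (⟨fun q => A.1 q.1 q.2, by rw [Fintype.sum_prod_type]; exact A.2.1⟩ :
      {f : Fin n × Fin n → ℕ // ∑ q, f q = r})) ?_
  rintro ⟨A, hA⟩ ⟨B, hB⟩ h
  simp only [Subtype.mk.injEq] at h ⊢
  funext i j
  exact congrFun h (i, j)

lemma cnt3 (n r s : ℕ) (hs : s ≤ n) (D : Finset (Fin n)) (hD : D.card = s) :
    Nat.card {A : Matrix (Fin n) (Fin n) ℕ //
        (∑ i, ∑ j, A i j) = r ∧ ∀ i, (A i i = 0 ↔ i ∈ D)}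
      = if n ≤ r + s then (n ^ 2 + r - n - 1).choose (r + s - n) else 0 := by
  classical
  set emb : Fin n ↪ Fin n × Fin n := ⟨fun i => (i, i), fun a b h => (Prod.mk.injEq _ _ _ _ ▸ h).1⟩
    with hemb
  set Z : Finset (Fin n × Fin n) := D.map emb with hZ
  set P : Finset (Fin n × Fin n) := (univ \ D).map emb with hP
  have hdisj : Disjoint Z P := by
    rw [hZ, hP, Finset.disjoint_map]
    exact Finset.disjoint_sdiff
  have hZc : Z.card = s := by rw [hZ, Finset.card_map, hD]
  have hPc : P.card = n - s := by
    rw [hP, Finset.card_map, Finset.card_sdiff_of_subset (Finset.subset_univ D), Finset.card_univ,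
      Fintype.card_fin, hD]
  have e : {A : Matrix (Fin n) (Fin n) ℕ //
        (∑ i, ∑ j, A i j) = r ∧ ∀ i, (A i i = 0 ↔ i ∈ D)} ≃
      {f : Fin n × Fin n → ℕ //
        ∑ q, f q = r ∧ (∀ q ∈ Z, f q = 0) ∧ (∀ q ∈ P, f q ≠ 0)} := by
    refine ⟨fun A => ⟨fun q => A.1 q.1 q.2, ?_, ?_, ?_⟩,
      fun f => ⟨Matrix.of (fun i j => f.1 (i, j)), ?_, ?_⟩, fun A => rfl, fun f => rfl⟩
    · rw [Fintype.sum_prod_type]; exact A.2.1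
    · intro q hq
      rw [hZ, Finset.mem_map] at hq
      obtain ⟨i, hi, rfl⟩ := hq
      exact (A.2.2 i).2 hi
    · intro q hq
      rw [hP, Finset.mem_map] at hq
      obtain ⟨i, hi, rfl⟩ := hq
      simp only [Finset.mem_sdiff, Finset.mem_univ, true_and] at hi
      exact fun h => hi ((A.2.2 i).1 h)
    · exact (Fintype.sum_prod_type (fun q : Fin n × Fin n => f.1 q)).symm.trans f.2.1
    · intro i
      constructor
      · intro h
        by_contra hi
        exact f.2.2.2 (i, i) (by rw [hP, Finset.mem_map]; exact ⟨i, by simp [hi], rfl⟩) h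
      · intro hi
        exact f.2.2.1 (i, i) (by rw [hZ, Finset.mem_map]; exact ⟨i, hi, rfl⟩)
  rw [Nat.card_congr e, cnt2 Z P hdisj r, hZc, hPc, Fintype.card_prod, Fintype.card_fin]
  have hnm : n ≤ n * n := by nlinarith
  have hsq : n ^ 2 = n * n := sq n
  rw [hsq]
  generalize hm : n * n = m at hnm ⊢
  have h1 : (n - s ≤ r) ↔ (n ≤ r + s) := by omega
  split_ifs with h2 h3 <;> try omega
  congr 1 <;> omega

lemma cnt4 (n r s : ℕ) (hs : s ≤ n) :
    Nat.card {A : Matrix (Fin n) (Fin n) ℕ // (∑ i, ∑ j, A i j) = r ∧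
        (Finset.univ.filter fun i => A i i = 0).card = s}
      = n.choose s * (if n ≤ r + s then (n ^ 2 + r - n - 1).choose (r + s - n) else 0) := by
  classical
  set F : Finset (Finset (Fin n)) := Finset.powersetCard s univ with hF
  have e : {A : Matrix (Fin n) (Fin n) ℕ // (∑ i, ∑ j, A i j) = r ∧
        (Finset.univ.filter fun i => A i i = 0).card = s} ≃
      Σ D : ↥F, {A : Matrix (Fin n) (Fin n) ℕ //
        (∑ i, ∑ j, A i j) = r ∧ ∀ i, (A i i = 0 ↔ i ∈ D.1)} := by
    refine ⟨fun A => ⟨⟨Finset.univ.filter (fun i => A.1 i i = 0), ?_⟩,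
        ⟨A.1, A.2.1, fun i => by simp⟩⟩,
      fun X => ⟨X.2.1, X.2.2.1, ?_⟩, fun A => rfl, ?_⟩
    · rw [hF, Finset.mem_powersetCard]
      exact ⟨Finset.subset_univ _, A.2.2⟩
    · have hDf : Finset.univ.filter (fun i => X.2.1 i i = 0) = X.1.1 :=
        Finset.ext fun i => by simp [X.2.2.2 i]
      rw [hDf]
      exact (Finset.mem_powersetCard.1 X.1.2).2
    · rintro ⟨⟨D, hD⟩, ⟨A, hA1, hA2⟩⟩
      have h1 : Finset.univ.filter (fun i => A i i = 0) = D :=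
        Finset.ext fun i => by simp [hA2 i]
      subst h1
      rfl
  rw [Nat.card_congr e, natCard_sigma]
  have : ∀ D : ↥F, Nat.card {A : Matrix (Fin n) (Fin n) ℕ //
      (∑ i, ∑ j, A i j) = r ∧ ∀ i, (A i i = 0 ↔ i ∈ D.1)}
      = (if n ≤ r + s then (n ^ 2 + r - n - 1).choose (r + s - n) else 0) := by
    intro D
    exact cnt3 n r s hs D.1 (Finset.mem_powersetCard.1 D.2).2
  rw [Finset.sum_congr rfl (fun D _ => this D), Finset.sum_const, Finset.card_univ,
    Fintype.card_coe, hF, Finset.card_powersetCard, Finset.card_univ, Fintype.card_fin,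
    smul_eq_mul]

lemma cnt5 (n r : ℕ) :
    Nat.card {A : Matrix (Fin n) (Fin n) ℕ // (∑ i, ∑ j, A i j) = r ∧ ∃ i, A i i = 0}
      = ∑ s ∈ Finset.Icc 1 n, n.choose s *
          (if n ≤ r + s then (n ^ 2 + r - n - 1).choose (r + s - n) else 0) := by
  classical
  set I : Finset ℕ := Finset.Icc 1 n with hI
  have e : {A : Matrix (Fin n) (Fin n) ℕ // (∑ i, ∑ j, A i j) = r ∧ ∃ i, A i i = 0} ≃
      Σ s : ↥I, {A : Matrix (Fin n) (Fin n) ℕ // (∑ i, ∑ j, A i j) = r ∧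
        (Finset.univ.filter fun i => A i i = 0).card = s.1} := by
    refine ⟨fun A => ⟨⟨(Finset.univ.filter fun i => A.1 i i = 0).card, ?_⟩,
        ⟨A.1, A.2.1, rfl⟩⟩, fun X => ⟨X.2.1, X.2.2.1, ?_⟩, fun A => rfl, ?_⟩
    · rw [hI, Finset.mem_Icc]
      obtain ⟨i, hi⟩ := A.2.2
      refine ⟨Finset.card_pos.2 ⟨i, Finset.mem_filter.2 ⟨Finset.mem_univ i, hi⟩⟩, ?_⟩
      exact (Finset.card_filter_le _ _).trans (by simp)
    · have h1 : 1 ≤ X.1.1 := (Finset.mem_Icc.1 X.1.2).1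
      have h2 := X.2.2.2
      have : (Finset.univ.filter fun i => X.2.1 i i = 0).Nonempty :=
        Finset.card_pos.1 (by omega)
      obtain ⟨i, hi⟩ := this
      exact ⟨i, (Finset.mem_filter.1 hi).2⟩
    · rintro ⟨⟨s, hsmem⟩, ⟨A, hA1, hA2⟩⟩
      simp only at hA2
      subst hA2
      rfl
  rw [Nat.card_congr e, natCard_sigma]
  have : ∀ s : ↥I, Nat.card {A : Matrix (Fin n) (Fin n) ℕ // (∑ i, ∑ j, A i j) = r ∧
      (Finset.univ.filter fun i => A i i = 0).card = s.1}
      = n.choose s.1 * (if n ≤ r + s.1 then (n ^ 2 + r - n - 1).choose (r + s.1 - n) else 0) :=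
    fun s => cnt4 n r s.1 (Finset.mem_Icc.1 s.2).2
  rw [Finset.sum_congr rfl (fun s _ => this s)]
  exact Finset.sum_coe_sort I
    (fun s => n.choose s * (if n ≤ r + s then (n ^ 2 + r - n - 1).choose (r + s - n) else 0))

theorem stmt8 (n r : ℕ) :
    {A : Matrix (Fin n) (Fin n) ℕ | (∑ i, ∑ j, A i j) = r ∧ ∃ i, A i i = 0}.ncard
      = ∑ s ∈ Finset.Icc 1 n, n.choose s *
          (if n ≤ r + s then (n ^ 2 + r - n - 1).choose (r + s - n) else 0) ∧
    ∀ s, 1 ≤ s → s ≤ n →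
      {A : Matrix (Fin n) (Fin n) ℕ | (∑ i, ∑ j, A i j) = r ∧
          (Finset.univ.filter fun i => A i i = 0).card = s}.ncard
        = n.choose s *
            (if n ≤ r + s then (n ^ 2 + r - n - 1).choose (r + s - n) else 0) := by
  constructor
  · rw [← Nat.card_coe_set_eq]
    exact cnt5 n r
  · intro s _ h2
    rw [← Nat.card_coe_set_eq]
    exact cnt4 n r s h2
end

section
/- Let λ ∈ ℕ^n and let A be an n×n matrix over ℕ with ro(A) = co(A) = λ. Suppose there exist indices i, s, j with i < s ≤ j (or j < i < s) such that a_{ij} ≠ 0 and a_{s,j+1} ≠ 0. Let B be the n×n matrix with b_{j,j+1} = b_{j+1,j} = 1, all other off-diagonal entries zero, and diagonal entries chosen so that ro(B) = co(B) = λ (i.e., b_{jj} = λ_j − 1, b_{j+1,j+1} = λ_{j+1} − 1, and b_{tt} = λ_t otherwise). Then B_{NE,l,m} ≤ A_{NE,l,m} and B_{SW,l,m} ≤ A_{SW,l,m} for all l, m; that is, A degenerates to B, and moreover B ≠ the diagonal matrix with diagonal λ. -/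
open Finset

namespace Stmt11Aux

variable {n : ℕ}

def Sf (A : Matrix (Fin n) (Fin n) ℕ) (P : Fin n → Fin n → Prop) [∀ x y, Decidable (P x y)] : ℕ :=
  ∑ x : Fin n, ∑ y : Fin n, if P x y then A x y else 0

lemma Sf_mono {A : Matrix (Fin n) (Fin n) ℕ} {P Q : Fin n → Fin n → Prop}
    [∀ x y, Decidable (P x y)] [∀ x y, Decidable (Q x y)]
    (h : ∀ x y, P x y → Q x y) : Sf A P ≤ Sf A Q := by
  refine Finset.sum_le_sum fun x _ => Finset.sum_le_sum fun y _ => ?_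
  split_ifs with h1 h2
  · exact le_refl _
  · exact absurd (h x y h1) h2
  · exact Nat.zero_le _
  · exact le_refl _

lemma Sf_congr {A : Matrix (Fin n) (Fin n) ℕ} {P Q : Fin n → Fin n → Prop}
    [∀ x y, Decidable (P x y)] [∀ x y, Decidable (Q x y)]
    (h : ∀ x y, P x y ↔ Q x y) : Sf A P = Sf A Q := by
  refine Finset.sum_congr rfl fun x _ => Finset.sum_congr rfl fun y _ => ?_
  simp only [h]

lemma Sf_split {A : Matrix (Fin n) (Fin n) ℕ} {P Q : Fin n → Fin n → Prop}
    [∀ x y, Decidable (P x y)] [∀ x y, Decidable (Q x y)]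
    (h : ∀ x y, ¬(P x y ∧ Q x y)) :
    Sf A (fun x y => P x y ∨ Q x y) = Sf A P + Sf A Q := by
  simp only [Sf, ← Finset.sum_add_distrib]
  refine Finset.sum_congr rfl fun x _ => Finset.sum_congr rfl fun y _ => ?_
  by_cases hP : P x y <;> by_cases hQ : Q x y <;> simp [hP, hQ]
  exact absurd ⟨hP, hQ⟩ (h x y)

lemma Sf_entry {A : Matrix (Fin n) (Fin n) ℕ} {P : Fin n → Fin n → Prop}
    [∀ x y, Decidable (P x y)] {x y : Fin n} (h : P x y) : A x y ≤ Sf A P := by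
  have h1 : A x y ≤ ∑ y' : Fin n, if P x y' then A x y' else 0 := by
    have := Finset.single_le_sum (f := fun y' => if P x y' then A x y' else 0)
      (fun _ _ => Nat.zero_le _) (Finset.mem_univ y)
    simpa [h] using this
  exact h1.trans (Finset.single_le_sum (f := fun x' => ∑ y' : Fin n, if P x' y' then A x' y' else 0)
    (fun _ _ => Nat.zero_le _) (Finset.mem_univ x))


variable {lam : Fin n → ℕ} {A : Matrix (Fin n) (Fin n) ℕ}

lemma Sf_row (hro : ∀ i, ∑ y, A i y = lam i) (p : Fin n → Prop) [DecidablePred p] :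
    Sf A (fun x _ => p x) = ∑ x : Fin n, if p x then lam x else 0 := by
  refine Finset.sum_congr rfl fun x _ => ?_
  by_cases h : p x <;> simp [h, hro x]

lemma Sf_col (hco : ∀ i, ∑ x, A x i = lam i) (q : Fin n → Prop) [DecidablePred q] :
    Sf A (fun _ y => q y) = ∑ y : Fin n, if q y then lam y else 0 := by
  rw [Sf, Finset.sum_comm]
  refine Finset.sum_congr rfl fun y _ => ?_
  by_cases h : q y <;> simp [h, hco y]

lemma Sf_balance (hro : ∀ i, ∑ y, A i y = lam i) (hco : ∀ i, ∑ x, A x i = lam i) (m : Fin n) :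
    Sf A (fun x y => ¬ x < m ∧ y < m) = Sf A (fun x y => x < m ∧ ¬ y < m) := by
  have e0 : Sf A (fun x _ => x < m) = Sf A (fun _ y => y < m) := by
    rw [Sf_row hro, Sf_col hco]
  have e1 : Sf A (fun x y => x < m) =
      Sf A (fun x y => x < m ∧ y < m) + Sf A (fun x y => x < m ∧ ¬ y < m) := by
    rw [← Sf_split (fun x y h => h.2.2 h.1.2)]
    exact Sf_congr (by tauto)
  have e2 : Sf A (fun x y => y < m) =
      Sf A (fun x y => x < m ∧ y < m) + Sf A (fun x y => ¬ x < m ∧ y < m) := by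
    rw [← Sf_split (fun x y h => h.2.1 h.1.1)]
    exact Sf_congr (by tauto)
  omega

lemma D_le_NE (hro : ∀ i, ∑ y, A i y = lam i) (hco : ∀ i, ∑ x, A x i = lam i) (l m : Fin n) :
    (∑ t : Fin n, if m ≤ t ∧ t ≤ l then lam t else 0) ≤ NEf A l m := by
  have hNE : NEf A l m = Sf A (fun x y => x ≤ l ∧ m ≤ y) := rfl
  by_cases hlm : l < m
  · have h0 : ∀ t : Fin n, ¬ (m ≤ t ∧ t ≤ l) := fun t ⟨h1, h2⟩ =>
      absurd (h1.trans h2) (not_le_of_gt hlm)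
    simp [h0]
  · push_neg at hlm
    have hD : (∑ t : Fin n, if m ≤ t ∧ t ≤ l then lam t else 0)
        = Sf A (fun x _ => m ≤ x ∧ x ≤ l) := (Sf_row hro _).symm
    rw [hD]
    have hsplit : Sf A (fun x y => m ≤ x ∧ x ≤ l) =
        Sf A (fun x y => (m ≤ x ∧ x ≤ l) ∧ m ≤ y) + Sf A (fun x y => (m ≤ x ∧ x ≤ l) ∧ ¬ m ≤ y) := by
      rw [← Sf_split (fun x y h => h.2.2 h.1.2)]
      exact Sf_congr (by tauto)
    have hb1 : Sf A (fun x y => (m ≤ x ∧ x ≤ l) ∧ m ≤ y)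
        ≤ Sf A (fun x y => (x ≤ l ∧ m ≤ y) ∧ ¬ x < m) :=
      Sf_mono (fun x y h => ⟨⟨h.1.2, h.2⟩, not_lt_of_ge h.1.1⟩)
    have hb2 : Sf A (fun x y => (m ≤ x ∧ x ≤ l) ∧ ¬ m ≤ y)
        ≤ Sf A (fun x y => (x ≤ l ∧ m ≤ y) ∧ x < m) := by
      calc Sf A (fun x y => (m ≤ x ∧ x ≤ l) ∧ ¬ m ≤ y)
          ≤ Sf A (fun x y => ¬ x < m ∧ y < m) :=
            Sf_mono (fun x y h => ⟨not_lt_of_ge h.1.1, lt_of_not_ge h.2⟩)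
        _ = Sf A (fun x y => x < m ∧ ¬ y < m) := Sf_balance hro hco m
        _ ≤ Sf A (fun x y => (x ≤ l ∧ m ≤ y) ∧ x < m) :=
            Sf_mono (fun x y h => ⟨⟨(le_of_lt h.1).trans hlm, le_of_not_gt h.2⟩, h.1⟩)
    have hNEsplit : NEf A l m =
        Sf A (fun x y => (x ≤ l ∧ m ≤ y) ∧ x < m) + Sf A (fun x y => (x ≤ l ∧ m ≤ y) ∧ ¬ x < m) := by
      rw [hNE, ← Sf_split (fun x y h => h.2.2 h.1.2)]
      exact Sf_congr (by tauto)
    omega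


lemma sum_single_ite (a : Fin n) (P : Fin n → Prop) [DecidablePred P] :
    (∑ t : Fin n, if t = a ∧ P t then (1:ℕ) else 0) = if P a then 1 else 0 := by
  rw [Fintype.sum_eq_single a (fun b hb => by simp [hb])]
  simp

lemma sum_pair_ite (a b : Fin n) (P : Fin n → Fin n → Prop) [∀ x y, Decidable (P x y)] :
    (∑ x : Fin n, ∑ y : Fin n, if x = a ∧ y = b ∧ P x y then (1:ℕ) else 0)
      = if P a b then 1 else 0 := by
  rw [Fintype.sum_eq_single a (fun c hc => by simp [hc])]
  rw [Fintype.sum_eq_single b (fun c hc => by simp [hc])]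
  simp [and_assoc]

lemma NEf_B (lam : Fin n → ℕ) (j j' : Fin n) (hjj' : (j' : ℕ) = (j : ℕ) + 1) (l m : Fin n) :
    NEf (fun x y =>
        if x = y then (if x = j ∨ x = j' then lam x - 1 else lam x)
        else if (x = j ∧ y = j') ∨ (x = j' ∧ y = j) then 1 else 0) l m
      = (∑ t : Fin n, if m ≤ t ∧ t ≤ l then (if t = j ∨ t = j' then lam t - 1 else lam t) else 0)
        + (if j ≤ l ∧ m ≤ j' then 1 else 0) + (if j' ≤ l ∧ m ≤ j then 1 else 0) := by
  have hne : j ≠ j' := fun h => by rw [h] at hjj'; omega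
  have key : ∀ x y : Fin n,
      (if x ≤ l ∧ m ≤ y then
        (if x = y then (if x = j ∨ x = j' then lam x - 1 else lam x)
         else if (x = j ∧ y = j') ∨ (x = j' ∧ y = j) then 1 else 0) else 0)
      = (if y = x then (if m ≤ x ∧ x ≤ l then (if x = j ∨ x = j' then lam x - 1 else lam x) else 0) else 0)
        + ((if x = j ∧ y = j' ∧ (x ≤ l ∧ m ≤ y) then 1 else 0)
          + (if x = j' ∧ y = j ∧ (x ≤ l ∧ m ≤ y) then 1 else 0)) := by
    intro x y
    by_cases hxy : x = y
    · subst hxy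
      have c1 : ¬ (x = j ∧ x = j') := fun h => hne (h.1.symm.trans h.2)
      have c2 : ¬ (x = j' ∧ x = j) := fun h => hne (h.2.symm.trans h.1)
      by_cases hc : x ≤ l ∧ m ≤ x
      · simp [hc, hc.1, hc.2, c1, c2]
      · have hc' : ¬ (m ≤ x ∧ x ≤ l) := fun h => hc ⟨h.2, h.1⟩
        simp [hc, hc', c1, c2]
    · have hyx : y ≠ x := Ne.symm hxy
      simp only [hxy, if_neg, hyx, if_false, Nat.zero_add]
      by_cases hc : x ≤ l ∧ m ≤ y
      · simp only [hc, and_true, if_true]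
        by_cases h1 : x = j ∧ y = j'
        · have h2 : ¬ (x = j' ∧ y = j) := fun h => hne (h1.1.symm.trans h.1)
          simp [h1, h2]
          exact fun h _ => hne h
        · by_cases h2 : x = j' ∧ y = j
          · simp [h1, h2]
            exact fun h hh => hne hh
          · simp [h1, h2]
      · simp [hc]
  have step1 : NEf (fun x y =>
        if x = y then (if x = j ∨ x = j' then lam x - 1 else lam x)
        else if (x = j ∧ y = j') ∨ (x = j' ∧ y = j) then 1 else 0) l m
      = ∑ x : Fin n, ∑ y : Fin n,
        ((if y = x then (if m ≤ x ∧ x ≤ l then (if x = j ∨ x = j' then lam x - 1 else lam x) else 0) else 0)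
        + ((if x = j ∧ y = j' ∧ (x ≤ l ∧ m ≤ y) then 1 else 0)
          + (if x = j' ∧ y = j ∧ (x ≤ l ∧ m ≤ y) then 1 else 0))) :=
    Finset.sum_congr rfl fun x _ => Finset.sum_congr rfl fun y _ => key x y
  rw [step1]
  simp only [Finset.sum_add_distrib]
  rw [sum_pair_ite, sum_pair_ite]
  have hdiag : (∑ x : Fin n, ∑ y : Fin n, if y = x then
        (if m ≤ x ∧ x ≤ l then (if x = j ∨ x = j' then lam x - 1 else lam x) else 0) else 0)
      = ∑ t : Fin n, if m ≤ t ∧ t ≤ l then (if t = j ∨ t = j' then lam t - 1 else lam t) else 0 := by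
    refine Finset.sum_congr rfl fun x _ => ?_
    rw [Finset.sum_ite_eq' Finset.univ x]
    simp
  rw [hdiag]
  ring

lemma D_decomp (lam : Fin n → ℕ) (j j' : Fin n) (hne : j ≠ j')
    (h1 : 1 ≤ lam j) (h2 : 1 ≤ lam j') (l m : Fin n) :
    (∑ t : Fin n, if m ≤ t ∧ t ≤ l then lam t else 0)
      = (∑ t : Fin n, if m ≤ t ∧ t ≤ l then (if t = j ∨ t = j' then lam t - 1 else lam t) else 0)
        + (if m ≤ j ∧ j ≤ l then 1 else 0) + (if m ≤ j' ∧ j' ≤ l then 1 else 0) := by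
  have key : ∀ t : Fin n, (if m ≤ t ∧ t ≤ l then lam t else 0)
      = (if m ≤ t ∧ t ≤ l then (if t = j ∨ t = j' then lam t - 1 else lam t) else 0)
        + (if t = j ∧ (m ≤ t ∧ t ≤ l) then 1 else 0) + (if t = j' ∧ (m ≤ t ∧ t ≤ l) then 1 else 0) := by
    intro t
    by_cases hc : m ≤ t ∧ t ≤ l
    · by_cases hj : t = j
      · have hj2 : t ≠ j' := fun h => hne (hj.symm.trans h)
        subst hj; simp [hc, hj2]; omega
      · by_cases hj2 : t = j'
        · subst hj2; simp [hc, hj]; omega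
        · simp [hc, hj, hj2]
    · simp [hc]
  rw [Finset.sum_congr rfl fun t _ => key t]
  simp only [Finset.sum_add_distrib, sum_single_ite]

lemma keyNE {lam : Fin n → ℕ} {A : Matrix (Fin n) (Fin n) ℕ}
    (hro : ∀ i, ∑ y, A i y = lam i) (hco : ∀ i, ∑ x, A x i = lam i)
    (j j' : Fin n) (hjj' : (j' : ℕ) = (j : ℕ) + 1)
    (h1 : 1 ≤ lam j) (h2 : 1 ≤ lam j') (hone : 1 ≤ NEf A j j') (l m : Fin n) :
    NEf (fun x y =>
        if x = y then (if x = j ∨ x = j' then lam x - 1 else lam x)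
        else if (x = j ∧ y = j') ∨ (x = j' ∧ y = j) then 1 else 0) l m ≤ NEf A l m := by
  have hne : j ≠ j' := fun h => by rw [h] at hjj'; omega
  rw [NEf_B lam j j' hjj']
  by_cases hc : l = j ∧ m = j'
  · obtain ⟨rfl, rfl⟩ := hc
    have hz : ∀ t : Fin n, ¬ (m ≤ t ∧ t ≤ l) := by
      intro t ⟨a, b⟩
      have := a.trans b
      rw [Fin.le_def, hjj'] at this
      omega
    have he1 : l ≤ l ∧ m ≤ m := ⟨le_refl _, le_refl _⟩
    have he2 : ¬ (m ≤ l) := by rw [Fin.le_def, hjj']; omega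
    have he2' : ¬ (m ≤ l ∧ m ≤ m) := fun h => he2 h.1
    simpa [hz, he1, he2, he2'] using hone
  · have hD := D_decomp lam j j' hne h1 h2 l m
    have hDN := D_le_NE hro hco l m
    have hee : (if j ≤ l ∧ m ≤ j' then (1:ℕ) else 0) + (if j' ≤ l ∧ m ≤ j then 1 else 0)
        ≤ (if m ≤ j ∧ j ≤ l then 1 else 0) + (if m ≤ j' ∧ j' ≤ l then 1 else 0) := by
      simp only [Fin.ext_iff] at hc
      simp only [Fin.le_def, hjj'] at *
      split_ifs <;> omega
    omega

lemma NE_cross {lam : Fin n → ℕ} {A : Matrix (Fin n) (Fin n) ℕ}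
    (hro : ∀ i, ∑ y, A i y = lam i) (hco : ∀ i, ∑ x, A x i = lam i)
    (j j' : Fin n) (hjj' : (j' : ℕ) = (j : ℕ) + 1) :
    NEf A j j' = Sf A (fun x y => ¬ x ≤ j ∧ y ≤ j) := by
  have h1 : NEf A j j' = Sf A (fun x y => x ≤ j ∧ j' ≤ y) := rfl
  have e1 : Sf A (fun x y => x ≤ j ∧ j' ≤ y) = Sf A (fun x y => x < j' ∧ ¬ y < j') :=
    Sf_congr (fun x y => by simp only [Fin.le_def, Fin.lt_def, hjj']; omega)
  rw [h1, e1, ← Sf_balance hro hco j']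
  exact Sf_congr (fun x y => by simp only [Fin.le_def, Fin.lt_def, hjj']; omega)

lemma SW_eq_NE_transpose (C : Matrix (Fin n) (Fin n) ℕ) (l m : Fin n) :
    SWf C l m = NEf C.transpose m l := by
  rw [NEf, Finset.sum_comm, SWf]
  refine Finset.sum_congr rfl fun x _ => Finset.sum_congr rfl fun y _ => ?_
  simp only [Matrix.transpose_apply]
  exact if_congr and_comm rfl rfl

end Stmt11Aux

open Stmt11Aux

theorem stmt11 {n : ℕ} (lam : Fin n → ℕ) (A : Matrix (Fin n) (Fin n) ℕ)
    (hro : ∀ i, ∑ y, A i y = lam i) (hco : ∀ i, ∑ x, A x i = lam i)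
    (i s j : Fin n) (hj : (j : ℕ) + 1 < n)
    (hidx : (i < s ∧ s ≤ j) ∨ (j < i ∧ i < s))
    (hij : A i j ≠ 0) (hsj : A s ⟨(j : ℕ) + 1, hj⟩ ≠ 0) :
    ∀ B : Matrix (Fin n) (Fin n) ℕ,
      (B = fun x y =>
        if x = y then (if x = j ∨ x = (⟨(j : ℕ) + 1, hj⟩ : Fin n) then lam x - 1 else lam x)
        else if (x = j ∧ y = (⟨(j : ℕ) + 1, hj⟩ : Fin n)) ∨
            (x = (⟨(j : ℕ) + 1, hj⟩ : Fin n) ∧ y = j) then 1 else 0) →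
      (∀ l m : Fin n, NEf B l m ≤ NEf A l m ∧ SWf B l m ≤ SWf A l m) ∧
        B ≠ Matrix.diagonal lam := by
  intro B hB
  set j' : Fin n := ⟨(j : ℕ) + 1, hj⟩ with hj'def
  have hjj' : (j' : ℕ) = (j : ℕ) + 1 := rfl
  have hne : j ≠ j' := Fin.ne_of_val_ne (by omega)
  have hAij : 1 ≤ A i j := Nat.one_le_iff_ne_zero.mpr hij
  have hAsj : 1 ≤ A s j' := Nat.one_le_iff_ne_zero.mpr hsj
  have hl1 : 1 ≤ lam j := le_trans hAij (by
    rw [← hco j]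
    exact Finset.single_le_sum (f := fun x => A x j) (fun _ _ => Nat.zero_le _)
      (Finset.mem_univ i))
  have hl2 : 1 ≤ lam j' := le_trans hAsj (by
    rw [← hco j']
    exact Finset.single_le_sum (f := fun x => A x j') (fun _ _ => Nat.zero_le _)
      (Finset.mem_univ s))
  have eNE : NEf A j j' = Sf A (fun x y => x ≤ j ∧ j' ≤ y) := rfl
  have hone : 1 ≤ NEf A j j' := by
    rcases hidx with ⟨h1, h2⟩ | ⟨h1, h2⟩
    · have h := Sf_entry (A := A) (P := fun x y => x ≤ j ∧ j' ≤ y) (x := s) (y := j')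
        ⟨h2, le_refl _⟩
      rw [← eNE] at h
      omega
    · rw [NE_cross hro hco j j' hjj']
      have h := Sf_entry (A := A) (P := fun x y => ¬ x ≤ j ∧ y ≤ j) (x := i) (y := j)
        ⟨not_le_of_gt h1, le_refl _⟩
      omega
  have hroT : ∀ t, ∑ y, A.transpose t y = lam t := fun t => by
    simpa [Matrix.transpose_apply] using hco t
  have hcoT : ∀ t, ∑ x, A.transpose x t = lam t := fun t => by
    simpa [Matrix.transpose_apply] using hro t
  have hBsymm : B.transpose = B := by
    rw [hB]
    funext x y
    change (fun x y : Fin n =>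
        if x = y then (if x = j ∨ x = j' then lam x - 1 else lam x)
        else if (x = j ∧ y = j') ∨ (x = j' ∧ y = j) then (1 : ℕ) else 0) y x = _
    rcases eq_or_ne x y with rfl | hxy
    · rfl
    · have hyx := Ne.symm hxy
      simp only [if_neg hxy, if_neg hyx]
      exact if_congr (by tauto) rfl rfl
  have honeT : 1 ≤ NEf A.transpose j j' := by
    rw [← SW_eq_NE_transpose A j' j]
    have hsw : SWf A j' j = Sf A (fun x y => j' ≤ x ∧ y ≤ j) := rfl
    have hsw2 : Sf A (fun x y => j' ≤ x ∧ y ≤ j) = Sf A (fun x y => ¬ x ≤ j ∧ y ≤ j) :=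
      Sf_congr (fun x y => by simp only [Fin.le_def, hjj']; omega)
    rw [hsw, hsw2, ← NE_cross hro hco j j' hjj']
    exact hone
  refine ⟨fun l m => ⟨?_, ?_⟩, ?_⟩
  · rw [hB]
    exact keyNE hro hco j j' hjj' hl1 hl2 hone l m
  · rw [SW_eq_NE_transpose B l m, SW_eq_NE_transpose A l m, hBsymm, hB]
    exact keyNE hroT hcoT j j' hjj' hl1 hl2 honeT m l
  · intro h
    have h1 : B j j' = 1 := by
      rw [hB]
      simp [hne]
    have h2 : B j j' = 0 := by
      rw [h, Matrix.diagonal_apply_ne lam hne]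
    omega
end

section
/- Let n ≥ 1, and consider generic symmetric n×n matrices over ℕ with row-sum vector λ ∈ ℕ^n. For each composition m = (m_1,…,m_s) of n, there is exactly one such matrix that is block-diagonal with blocks of sizes m_1,…,m_s along the diagonal, each diagonal block being the unique generic matrix with the corresponding row- and column-sums given by the respective consecutive entries of λ. In particular, for every composition m of n there exists a generic symmetric matrix O(λ,m) over ℕ with ro(O(λ,m)) = co(O(λ,m)) = λ having this block structure. -/
open Finset

namespace Stmt16

variable {n : ℕ} {ι : Type*} [DecidableEq ι]

/-- Cumulative sum of `lam` over the block of `i`, strictly before `i`. -/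
def Rp (blk : Fin n → ι) (lam : Fin n → ℕ) (i : Fin n) : ℕ :=
  ∑ k ∈ univ.filter (fun k => blk k = blk i ∧ k < i), lam k

/-- Cumulative sum of `lam` over the block of `i`, up to and including `i`. -/
def Rr (blk : Fin n → ι) (lam : Fin n → ℕ) (i : Fin n) : ℕ :=
  ∑ k ∈ univ.filter (fun k => blk k = blk i ∧ k ≤ i), lam k

/-- Total sum of `lam` over the block of `i`. -/
def Tt (blk : Fin n → ι) (lam : Fin n → ℕ) (i : Fin n) : ℕ :=
  ∑ k ∈ univ.filter (fun k => blk k = blk i), lam k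

variable (blk : Fin n → ι) (lam : Fin n → ℕ)

lemma Rr_eq (i : Fin n) : Rr blk lam i = Rp blk lam i + lam i := by
  have h : univ.filter (fun k => blk k = blk i ∧ k ≤ i)
      = insert i (univ.filter (fun k => blk k = blk i ∧ k < i)) := by
    ext k
    simp only [mem_filter, mem_univ, true_and, mem_insert]
    constructor
    · rintro ⟨hb, hle⟩
      rcases lt_or_eq_of_le hle with h' | h'
      · exact Or.inr ⟨hb, h'⟩
      · exact Or.inl h'
    · rintro (rfl | ⟨hb, hlt⟩)
      · exact ⟨rfl, le_refl _⟩
      · exact ⟨hb, le_of_lt hlt⟩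
  rw [Rr, h, sum_insert (by simp), Rp, add_comm]

lemma Rp_le_Rr (i : Fin n) : Rp blk lam i ≤ Rr blk lam i := by
  apply sum_le_sum_of_subset
  intro k
  simp only [mem_filter, mem_univ, true_and]
  exact fun ⟨h1, h2⟩ => ⟨h1, le_of_lt h2⟩

lemma Rr_le_Tt (i : Fin n) : Rr blk lam i ≤ Tt blk lam i := by
  apply sum_le_sum_of_subset
  intro k
  simp only [mem_filter, mem_univ, true_and]
  exact fun ⟨h1, _⟩ => h1

lemma Rr_le_Rp_of_lt {i j : Fin n} (h : blk i = blk j) (hij : i < j) :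
    Rr blk lam i ≤ Rp blk lam j := by
  apply sum_le_sum_of_subset
  intro k
  simp only [mem_filter, mem_univ, true_and]
  rintro ⟨hb, hk⟩
  exact ⟨hb.trans h, lt_of_le_of_lt hk hij⟩

lemma Tt_congr {i j : Fin n} (h : blk i = blk j) : Tt blk lam i = Tt blk lam j := by
  unfold Tt
  rw [h]

lemma partition (i : Fin n) {t : ℕ} (ht : t < Tt blk lam i) :
    ∃! j : Fin n, blk j = blk i ∧ Rp blk lam j ≤ t ∧ t < Rr blk lam j := by
  have hBne : (univ.filter (fun k => blk k = blk i)).Nonempty := ⟨i, by simp⟩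
  set j0 := (univ.filter (fun k => blk k = blk i)).max' hBne with hj0
  have hj0mem := (univ.filter (fun k => blk k = blk i)).max'_mem hBne
  have hj0blk : blk j0 = blk i := (mem_filter.mp hj0mem).2
  have hRrj0 : Rr blk lam j0 = Tt blk lam i := by
    unfold Rr Tt
    congr 1
    ext k
    simp only [mem_filter, mem_univ, true_and]
    constructor
    · exact fun ⟨hb, _⟩ => hb.trans hj0blk
    · intro hb
      exact ⟨hb.trans hj0blk.symm, le_max' _ _ (by simp [hb])⟩
  have hSne : (univ.filter (fun jj => blk jj = blk i ∧ t < Rr blk lam jj)).Nonempty :=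
    ⟨j0, mem_filter.mpr ⟨mem_univ _, hj0blk, by rw [hRrj0]; exact ht⟩⟩
  set j := (univ.filter (fun jj => blk jj = blk i ∧ t < Rr blk lam jj)).min' hSne with hjdef
  have hjmem : j ∈ univ.filter (fun jj => blk jj = blk i ∧ t < Rr blk lam jj) :=
    min'_mem _ hSne
  rw [mem_filter] at hjmem
  have hjblk : blk j = blk i := hjmem.2.1
  have hjRr : t < Rr blk lam j := hjmem.2.2
  have hRp : Rp blk lam j ≤ t := by
    have hPeq : univ.filter (fun k => blk k = blk j ∧ k < j)
        = univ.filter (fun k => blk k = blk i ∧ k < j) := by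
      ext k; simp [hjblk]
    rcases (univ.filter (fun k => blk k = blk i ∧ k < j)).eq_empty_or_nonempty with hP | hP
    · rw [Rp, hPeq, hP, sum_empty]
      exact Nat.zero_le t
    · set j' := (univ.filter (fun k => blk k = blk i ∧ k < j)).max' hP with hj'def
      have hj'mem := (univ.filter (fun k => blk k = blk i ∧ k < j)).max'_mem hP
      rw [mem_filter] at hj'mem
      have hj'blk : blk j' = blk i := hj'mem.2.1
      have hj'lt : j' < j := hj'mem.2.2
      have hRrj' : Rr blk lam j' = Rp blk lam j := by
        unfold Rr Rp
        congr 1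
        ext k
        simp only [mem_filter, mem_univ, true_and]
        constructor
        · rintro ⟨hb, hk⟩
          exact ⟨hb.trans (hj'blk.trans hjblk.symm), lt_of_le_of_lt hk hj'lt⟩
        · rintro ⟨hb, hk⟩
          refine ⟨hb.trans (hjblk.trans hj'blk.symm), ?_⟩
          exact le_max' _ _ (mem_filter.mpr ⟨mem_univ _, hb.trans hjblk, hk⟩)
      have hj'notS : ¬ (t < Rr blk lam j') := by
        intro hcon
        have hmem : j' ∈ univ.filter (fun jj => blk jj = blk i ∧ t < Rr blk lam jj) :=
          mem_filter.mpr ⟨mem_univ _, hj'blk, hcon⟩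
        exact absurd (min'_le _ j' hmem) (not_le.mpr hj'lt)
      omega
  refine ⟨j, ⟨hjblk, hRp, hjRr⟩, ?_⟩
  rintro y ⟨hyb, hy1, hy2⟩
  rcases lt_trichotomy y j with hlt | heq | hgt
  · have := Rr_le_Rp_of_lt blk lam (hyb.trans hjblk.symm) hlt
    omega
  · exact heq
  · have := Rr_le_Rp_of_lt blk lam (hjblk.trans hyb.symm) hgt
    omega

/-- The generic symmetric block matrix. -/
def genA (blk : Fin n → ι) (lam : Fin n → ℕ) (i j : Fin n) : ℕ :=
  if blk j = blk i then
    min (Rr blk lam i) (Tt blk lam i - Rp blk lam j)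
      - max (Rp blk lam i) (Tt blk lam i - Rr blk lam j)
  else 0

lemma genA_ne {i j : Fin n} (h : blk i ≠ blk j) : genA blk lam i j = 0 := by
  unfold genA
  rw [if_neg (fun hh => h hh.symm)]

lemma genA_card {i j : Fin n} (h : blk j = blk i) :
    genA blk lam i j = ((Ico (Rp blk lam i) (Rr blk lam i)).filter
      (fun s => Rp blk lam j ≤ Tt blk lam i - 1 - s ∧
        Tt blk lam i - 1 - s < Rr blk lam j)).card := by
  have h1 := Rp_le_Rr blk lam i
  have h2 := Rr_le_Tt blk lam i
  have h3 := Rp_le_Rr blk lam j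
  have h4 : Rr blk lam j ≤ Tt blk lam i :=
    (Rr_le_Tt blk lam j).trans (le_of_eq (Tt_congr blk lam h))
  have hset : (Ico (Rp blk lam i) (Rr blk lam i)).filter
      (fun s => Rp blk lam j ≤ Tt blk lam i - 1 - s ∧
        Tt blk lam i - 1 - s < Rr blk lam j)
      = Ico (max (Rp blk lam i) (Tt blk lam i - Rr blk lam j))
            (min (Rr blk lam i) (Tt blk lam i - Rp blk lam j)) := by
    ext s
    simp only [mem_filter, mem_Ico]
    omega
  rw [genA, if_pos h, hset, Nat.card_Ico]

lemma genA_row (i : Fin n) : ∑ jj, genA blk lam i jj = lam i := by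
  have h1 := Rp_le_Rr blk lam i
  have h2 := Rr_le_Tt blk lam i
  have hrw : ∑ jj, genA blk lam i jj
      = ∑ jj ∈ univ.filter (fun jj => blk jj = blk i), genA blk lam i jj := by
    symm
    apply sum_subset (subset_univ _)
    intro x _ hx
    simp only [mem_filter, mem_univ, true_and] at hx
    exact genA_ne blk lam (fun hh => hx hh.symm)
  rw [hrw]
  have hcard : ∀ jj ∈ univ.filter (fun jj => blk jj = blk i),
      genA blk lam i jj = ∑ s ∈ Ico (Rp blk lam i) (Rr blk lam i),
        if Rp blk lam jj ≤ Tt blk lam i - 1 - s ∧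
            Tt blk lam i - 1 - s < Rr blk lam jj then 1 else 0 := by
    intro jj hjj
    simp only [mem_filter, mem_univ, true_and] at hjj
    rw [genA_card blk lam hjj, card_filter]
  rw [sum_congr rfl hcard, sum_comm]
  have hone : ∀ s ∈ Ico (Rp blk lam i) (Rr blk lam i),
      (∑ jj ∈ univ.filter (fun jj => blk jj = blk i),
        if Rp blk lam jj ≤ Tt blk lam i - 1 - s ∧
            Tt blk lam i - 1 - s < Rr blk lam jj then 1 else 0) = 1 := by
    intro s hs
    rw [mem_Ico] at hs
    have hT : Tt blk lam i - 1 - s < Tt blk lam i := by omega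
    obtain ⟨j₀, ⟨hb₀, hc₀⟩, huniq⟩ := partition blk lam i hT
    rw [← card_filter, filter_filter, card_eq_one]
    refine ⟨j₀, ?_⟩
    ext a
    simp only [mem_filter, mem_univ, true_and, mem_singleton]
    constructor
    · rintro ⟨ha, hb, hc⟩
      exact huniq a ⟨ha, hb, hc⟩
    · rintro rfl
      exact ⟨hb₀, hc₀⟩
  rw [sum_congr rfl hone, sum_const, Nat.card_Ico, smul_eq_mul, mul_one]
  have := Rr_eq blk lam i
  omega

lemma genA_symm (i j : Fin n) : genA blk lam i j = genA blk lam j i := by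
  by_cases h : blk j = blk i
  · unfold genA
    rw [if_pos h, if_pos h.symm, ← Tt_congr blk lam h]
    have h1 := Rp_le_Rr blk lam i
    have h2 := Rr_le_Tt blk lam i
    have h3 := Rp_le_Rr blk lam j
    have h4 : Rr blk lam j ≤ Tt blk lam i :=
      (Rr_le_Tt blk lam j).trans (le_of_eq (Tt_congr blk lam h))
    omega
  · rw [genA_ne blk lam (fun hh => h hh.symm), genA_ne blk lam h]

lemma genA_col (i : Fin n) : ∑ jj, genA blk lam jj i = lam i := by
  have : ∀ jj : Fin n, genA blk lam jj i = genA blk lam i jj :=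
    fun jj => genA_symm blk lam jj i
  rw [sum_congr rfl (fun jj _ => this jj)]
  exact genA_row blk lam i

lemma genA_generic (i k j l : Fin n) (hik : i < k) (hjl : j < l)
    (h1 : blk i = blk k) (h2 : blk j = blk l) (h3 : blk i = blk j) :
    genA blk lam i j = 0 ∨ genA blk lam k l = 0 := by
  by_contra hc
  push_neg at hc
  obtain ⟨hA, hB⟩ := hc
  have hlk : blk l = blk k := (h2.symm.trans h3.symm).trans h1
  rw [genA, if_pos h3.symm] at hA
  rw [genA, if_pos hlk, ← Tt_congr blk lam h1] at hB
  have e1 := Rr_le_Rp_of_lt blk lam h1 hik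
  have e2 := Rr_le_Rp_of_lt blk lam h2 hjl
  have e3 : Rr blk lam j ≤ Tt blk lam i :=
    (Rr_le_Tt blk lam j).trans (le_of_eq (Tt_congr blk lam h3.symm))
  have e4 := Rp_le_Rr blk lam i
  have e5 := Rp_le_Rr blk lam j
  have e6 := Rp_le_Rr blk lam k
  have e7 := Rp_le_Rr blk lam l
  have e8 := Rr_le_Tt blk lam i
  omega

lemma corner (A : Matrix (Fin n) (Fin n) ℕ)
    (hrow : ∀ i, ∑ j, A i j = lam i) (hcol : ∀ i, ∑ j, A j i = lam i)
    (hblk : ∀ i j, blk i ≠ blk j → A i j = 0)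
    (hgen : ∀ i k j l : Fin n, i < k → j < l → blk i = blk k → blk j = blk l →
      blk i = blk j → A i j = 0 ∨ A k l = 0)
    {i j : Fin n} (hij : blk i = blk j) :
    ∑ k ∈ univ.filter (fun k => blk k = blk i ∧ k ≤ i),
      ∑ l ∈ univ.filter (fun l => blk l = blk i ∧ l ≤ j), A k l
      = (Rr blk lam i + Rr blk lam j) - Tt blk lam i := by
  set B := univ.filter (fun k => blk k = blk i) with hBdef
  set P := univ.filter (fun k => blk k = blk i ∧ k ≤ i) with hPdef
  set P' := univ.filter (fun k => blk k = blk i ∧ ¬k ≤ i) with hP'def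
  set Q := univ.filter (fun l => blk l = blk i ∧ l ≤ j) with hQdef
  set Q' := univ.filter (fun l => blk l = blk i ∧ ¬l ≤ j) with hQ'def
  have hPsplit : ∀ f : Fin n → ℕ, ∑ k ∈ P, f k + ∑ k ∈ P', f k = ∑ k ∈ B, f k := by
    intro f
    rw [hPdef, hP'def, hBdef, ← filter_filter, ← filter_filter]
    exact sum_filter_add_sum_filter_not _ _ f
  have hQsplit : ∀ f : Fin n → ℕ, ∑ l ∈ Q, f l + ∑ l ∈ Q', f l = ∑ l ∈ B, f l := by
    intro f
    rw [hQdef, hQ'def, hBdef, ← filter_filter, ← filter_filter]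
    exact sum_filter_add_sum_filter_not _ _ f
  have hrowB : ∀ k ∈ B, ∑ l ∈ B, A k l = lam k := by
    intro k hk
    rw [hBdef, mem_filter] at hk
    rw [← hrow k]
    apply sum_subset (subset_univ _)
    intro l _ hl
    rw [hBdef, mem_filter] at hl
    push_neg at hl
    exact hblk k l (fun hh => (hl (mem_univ _)) (hh.symm.trans hk.2))
  have hcolB : ∀ l ∈ B, ∑ k ∈ B, A k l = lam l := by
    intro l hl
    rw [hBdef, mem_filter] at hl
    rw [← hcol l]
    apply sum_subset (subset_univ _)
    intro k _ hk
    rw [hBdef, mem_filter] at hk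
    push_neg at hk
    exact hblk k l (fun hh => (hk (mem_univ _)) (hh.trans hl.2))
  have hPB : P ⊆ B := by
    intro k hk
    rw [hPdef, mem_filter] at hk
    rw [hBdef, mem_filter]
    exact ⟨hk.1, hk.2.1⟩
  have hQB : Q ⊆ B := by
    intro l hl
    rw [hQdef, mem_filter] at hl
    rw [hBdef, mem_filter]
    exact ⟨hl.1, hl.2.1⟩
  have key1 : (∑ k ∈ P, ∑ l ∈ Q, A k l) + (∑ k ∈ P, ∑ l ∈ Q', A k l)
      = Rr blk lam i := by
    rw [← sum_add_distrib]
    have h' : ∀ k ∈ P, (∑ l ∈ Q, A k l) + (∑ l ∈ Q', A k l) = lam k := by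
      intro k hk
      rw [hQsplit]
      exact hrowB k (hPB hk)
    rw [sum_congr rfl h', Rr, hPdef]
  have key2 : (∑ k ∈ P, ∑ l ∈ Q, A k l) + (∑ k ∈ P', ∑ l ∈ Q, A k l)
      = Rr blk lam j := by
    rw [sum_comm (s := P) (t := Q) (f := fun k l => A k l),
      sum_comm (s := P') (t := Q) (f := fun k l => A k l), ← sum_add_distrib]
    have h' : ∀ l ∈ Q, (∑ k ∈ P, A k l) + (∑ k ∈ P', A k l) = lam l := by
      intro l hl
      rw [hPsplit]
      exact hcolB l (hQB hl)
    rw [sum_congr rfl h', Rr, hQdef]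
    apply sum_congr _ (fun _ _ => rfl)
    ext l
    simp only [mem_filter, mem_univ, true_and]
    rw [hij]
  have key3 : (∑ k ∈ P, ∑ l ∈ Q, A k l) + (∑ k ∈ P, ∑ l ∈ Q', A k l)
      + ((∑ k ∈ P', ∑ l ∈ Q, A k l) + (∑ k ∈ P', ∑ l ∈ Q', A k l))
      = Tt blk lam i := by
    have hP1 : ∀ k ∈ P, (∑ l ∈ Q, A k l) + (∑ l ∈ Q', A k l) = ∑ l ∈ B, A k l :=
      fun k _ => hQsplit _
    have hP2 : ∀ k ∈ P', (∑ l ∈ Q, A k l) + (∑ l ∈ Q', A k l) = ∑ l ∈ B, A k l :=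
      fun k _ => hQsplit _
    rw [← sum_add_distrib, ← sum_add_distrib, sum_congr rfl hP1, sum_congr rfl hP2,
      hPsplit]
    rw [sum_congr rfl hrowB, Tt, hBdef]
  rcases Nat.eq_zero_or_pos (∑ k ∈ P, ∑ l ∈ Q, A k l) with hF | hF
  · omega
  · have hZ : ∑ k ∈ P', ∑ l ∈ Q', A k l = 0 := by
      have hne : ∑ k ∈ P, ∑ l ∈ Q, A k l ≠ 0 := Nat.pos_iff_ne_zero.mp hF
      obtain ⟨k, hkP, hk⟩ := exists_ne_zero_of_sum_ne_zero hne
      obtain ⟨l, hlQ, hl⟩ := exists_ne_zero_of_sum_ne_zero hk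
      rw [hPdef, mem_filter] at hkP
      rw [hQdef, mem_filter] at hlQ
      apply sum_eq_zero
      intro k' hk'
      apply sum_eq_zero
      intro l' hl'
      rw [hP'def, mem_filter] at hk'
      rw [hQ'def, mem_filter] at hl'
      have hkk' : k < k' := lt_of_le_of_lt hkP.2.2 (not_le.mp hk'.2.2)
      have hll' : l < l' := lt_of_le_of_lt hlQ.2.2 (not_le.mp hl'.2.2)
      rcases hgen k k' l l' hkk' hll' (hkP.2.1.trans hk'.2.1.symm)
        (hlQ.2.1.trans hl'.2.1.symm) (hkP.2.1.trans hlQ.2.1.symm) with h0 | h0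
      · exact absurd h0 hl
      · exact h0
    omega

end Stmt16

theorem stmt16 {n : ℕ} (hn : 1 ≤ n) (lam : Fin n → ℕ) (m : Composition n) :
    ∃! A : Matrix (Fin n) (Fin n) ℕ,
      (∀ i j, A i j = A j i) ∧
      (∀ i, ∑ j, A i j = lam i) ∧ (∀ i, ∑ j, A j i = lam i) ∧
      (∀ i j, m.index i ≠ m.index j → A i j = 0) ∧
      (∀ i k j l : Fin n, i < k → j < l →
        m.index i = m.index k → m.index j = m.index l → m.index i = m.index j →
        A i j = 0 ∨ A k l = 0) := by
  classical
  set blk : Fin n → Fin m.length := m.index with hblkdef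
  refine ⟨Stmt16.genA blk lam,
    ⟨fun i j => Stmt16.genA_symm blk lam i j,
     fun i => Stmt16.genA_row blk lam i,
     fun i => Stmt16.genA_col blk lam i,
     fun i j h => Stmt16.genA_ne blk lam h,
     fun i k j l h1 h2 h3 h4 h5 => Stmt16.genA_generic blk lam i k j l h1 h2 h3 h4 h5⟩,
    ?_⟩
  rintro A ⟨hsym, hrow, hcol, hblk, hgen⟩
  have key : ∀ N : ℕ, ∀ i j : Fin n, (i : ℕ) + (j : ℕ) = N →
      A i j = Stmt16.genA blk lam i j := by
    intro N
    induction N using Nat.strong_induction_on with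
    | _ N IH =>
      intro i j hN
      by_cases hij : blk i = blk j
      · have hcA := Stmt16.corner blk lam A hrow hcol hblk hgen hij
        have hcG := Stmt16.corner blk lam (Stmt16.genA blk lam)
          (Stmt16.genA_row blk lam) (Stmt16.genA_col blk lam)
          (fun i j h => Stmt16.genA_ne blk lam h)
          (fun i k j l h1 h2 h3 h4 h5 =>
            Stmt16.genA_generic blk lam i k j l h1 h2 h3 h4 h5) hij
        set P := univ.filter (fun k => blk k = blk i ∧ k ≤ i) with hPdef
        set Q := univ.filter (fun l => blk l = blk i ∧ l ≤ j) with hQdef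
        have hiP : i ∈ P := by rw [hPdef, mem_filter]; exact ⟨mem_univ _, rfl, le_refl _⟩
        have hjQ : j ∈ Q := by rw [hQdef, mem_filter]; exact ⟨mem_univ _, hij.symm, le_refl _⟩
        have hsplit : ∀ M : Matrix (Fin n) (Fin n) ℕ,
            ∑ k ∈ P, ∑ l ∈ Q, M k l
              = ((∑ k ∈ P.erase i, ∑ l ∈ Q, M k l) + ∑ l ∈ Q.erase j, M i l) + M i j := by
          intro M
          rw [← sum_erase_add P _ hiP, ← sum_erase_add Q (M i) hjQ, add_assoc]
        rw [hsplit A] at hcA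
        rw [hsplit (Stmt16.genA blk lam)] at hcG
        have hrest1 : ∑ k ∈ P.erase i, ∑ l ∈ Q, A k l
            = ∑ k ∈ P.erase i, ∑ l ∈ Q, Stmt16.genA blk lam k l := by
          apply sum_congr rfl
          intro k hk
          apply sum_congr rfl
          intro l hl
          have hk' := mem_of_mem_erase hk
          have hkne := ne_of_mem_erase hk
          rw [hPdef, mem_filter] at hk'
          rw [hQdef, mem_filter] at hl
          have hklt : (k : ℕ) < (i : ℕ) := by
            have := hk'.2.2
            rcases lt_or_eq_of_le this with h' | h'
            · exact h'
            · exact absurd h' hkne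
          have : (k : ℕ) + (l : ℕ) < N := by
            have := hl.2.2
            omega
          exact IH _ this k l rfl
        have hrest2 : ∑ l ∈ Q.erase j, A i l
            = ∑ l ∈ Q.erase j, Stmt16.genA blk lam i l := by
          apply sum_congr rfl
          intro l hl
          have hl' := mem_of_mem_erase hl
          have hlne := ne_of_mem_erase hl
          rw [hQdef, mem_filter] at hl'
          have hllt : (l : ℕ) < (j : ℕ) := by
            rcases lt_or_eq_of_le hl'.2.2 with h' | h'
            · exact h'
            · exact absurd h' hlne
          have : (i : ℕ) + (l : ℕ) < N := by omega
          exact IH _ this i l rfl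
        rw [hrest1, hrest2] at hcA
        omega
      · rw [hblk i j hij, Stmt16.genA_ne blk lam hij]
  ext i j
  exact key ((i : ℕ) + (j : ℕ)) i j rfl
end
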